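/- Let α ∈ ℂ be a primitive 60th root of unity and set (λ₁, λ₂, λ₃, λ₄) = (α, α²⁹, α¹¹, α¹⁹). Let Â₃ = [[λ₁λ₂, 0], [λ₁(λ₃−1), 1]] and Â₁ = [[λ₂(λ₃−1)+1, λ₂(1−λ₂)], [1−λ₃, λ₂]] in GL₂(ℂ). Then the group of transformations of the projective line ℙ(ℂ²) induced by the subgroup ⟨Â₁, Â₃⟩ of GL₂(ℂ) is finite of cardinality 60 (it is the icosahedral group, isomorphic to the alternating group A₅). -/
import Mathlib


noncomputable section

namespace Stmt19

def icoRels : Set (FreeGroup (Fin 2)) :=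
  {FreeGroup.of 0 * FreeGroup.of 0, (FreeGroup.of 1) ^ 3, (FreeGroup.of 1 * FreeGroup.of 0) ^ 5}

abbrev P := PresentedGroup icoRels

def X : P := PresentedGroup.of 0
def Y : P := PresentedGroup.of 1

lemma mk_eq_one {w : FreeGroup (Fin 2)} (h : w ∈ icoRels) :
    PresentedGroup.mk icoRels w = 1 :=
  (QuotientGroup.eq_one_iff _).2 (Subgroup.subset_normalClosure h)

lemma relX : X * X = 1 := by
  have : X * X = PresentedGroup.mk icoRels (FreeGroup.of 0 * FreeGroup.of 0) := by
    rw [map_mul]; rfl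
  rw [this]
  exact mk_eq_one (Set.mem_insert _ _)

lemma relY3 : Y ^ 3 = 1 := by
  have : Y ^ 3 = PresentedGroup.mk icoRels ((FreeGroup.of 1) ^ 3) := by
    rw [map_pow]; rfl
  rw [this]
  exact mk_eq_one (Set.mem_insert_of_mem _ (Set.mem_insert _ _))

lemma relZ5 : (Y * X) ^ 5 = 1 := by
  have : (Y * X) ^ 5 = PresentedGroup.mk icoRels ((FreeGroup.of 1 * FreeGroup.of 0) ^ 5) := by
    rw [map_pow, map_mul]; rfl
  rw [this]
  exact mk_eq_one (Set.mem_insert_of_mem _ (Set.mem_insert_of_mem _ rfl))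

lemma relXw : X * (X : P) = 1 := relX

lemma relYw : Y * (Y * Y) = (1 : P) := by
  calc Y * (Y * Y) = Y ^ 3 := by simp only [pow_succ, pow_zero, one_mul, mul_assoc]
  _ = 1 := relY3

lemma relZw : Y * (X * (Y * (X * (Y * (X * (Y * (X * (Y * X)))))))) = (1 : P) := by
  calc Y * (X * (Y * (X * (Y * (X * (Y * (X * (Y * X)))))))) = (Y * X) ^ 5 := by
        simp only [pow_succ, pow_zero, one_mul, mul_assoc]
  _ = 1 := relZ5

lemma Xinv : X⁻¹ = X := by
  rw [← mul_one X⁻¹, ← relX, ← mul_assoc, inv_mul_cancel, one_mul]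

lemma Yinv : Y⁻¹ = Y * Y := by
  have h : Y * (Y * Y) = 1 := relYw
  rw [← mul_one Y⁻¹, ← h, ← mul_assoc, inv_mul_cancel, one_mul]

def g0 : P := (1 : P)
def g1 : P := (Y : P)
def g2 : P := Y * Y
def g3 : P := Y * Y * X
def g4 : P := Y * Y * X * Y
def g5 : P := Y * Y * X * Y * X
def g6 : P := Y * Y * X * Y * Y
def g7 : P := Y * Y * X * Y * X * Y
def g8 : P := Y * Y * X * Y * X * Y * Y
def g9 : P := Y * Y * X * Y * X * Y * Y * X
def g10 : P := Y * Y * X * Y * X * Y * Y * X * Y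
def g11 : P := Y * Y * X * Y * X * Y * Y * X * Y * X

lemma f0y : g0 * Y = (Y * X) ^ 0 * g1 := by
  show ((1 : P)) * Y = (Y * X) ^ 0 * (Y)
  group

lemma f1x : g1 * X = (Y * X) ^ 1 * g0 := by
  show ((Y : P)) * X = (Y * X) ^ 1 * ((1 : P))
  group

lemma f0x : g0 * X = (Y * X) ^ 4 * g1 := by
  have hpre : g0 * (1 : P) = (Y * X) ^ 0 * g0 := by group
  have hsuf : g1 * (X) = (Y * X) ^ 1 * g0 := by
      calc g1 * (X)
        _ = (Y * X) ^ 0 * ((g1 * X)) := by group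
        _ = (Y * X) ^ 0 * (((Y * X) ^ 1 * g0)) := by rw [f1x]
        _ = (Y * X) ^ 1 * g0 := by group
  have e1 : (Y * X) ^ 0 * (g0 * X) * (X) = g0 := by
    calc (Y * X) ^ 0 * (g0 * X) * (X) = (g0 * ((1 : P))) * (X * (X)) := by
          rw [hpre]; group
      _ = g0 * (X * (X)) := by group
      _ = g0 * 1 := by rw [relXw]
      _ = g0 := mul_one _
  have e2 : (Y * X) ^ 0 * ((Y * X) ^ 4 * g1) * (X) = g0 := by
    calc (Y * X) ^ 0 * ((Y * X) ^ 4 * g1) * (X) = (Y*X) ^ 4 * (g1 * (X)) := by group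
      _ = (Y*X) ^ 4 * ((Y * X) ^ 1 * g0) := by rw [hsuf]
      _ = ((Y*X) ^ 5) ^ 1 * g0 := by group
      _ = g0 := by rw [relZ5, one_pow, one_mul]
  have e3 := e1.trans e2.symm
  have e4 := mul_right_cancel e3
  exact mul_left_cancel e4

lemma f1y : g1 * Y = (Y * X) ^ 0 * g2 := by
  show (Y) * Y = (Y * X) ^ 0 * (Y * Y)
  group

lemma f2y : g2 * Y = (Y * X) ^ 0 * g0 := by
  have hpre : g0 * (Y * (Y)) = (Y * X) ^ 0 * g2 := by
      calc g0 * (Y * (Y))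
        _ = (Y * X) ^ 0 * ((g0 * Y) * (Y)) := by group
        _ = (Y * X) ^ 0 * (((Y * X) ^ 0 * g1) * (Y)) := by rw [f0y]
        _ = (Y * X) ^ 0 * ((g1 * Y)) := by group
        _ = (Y * X) ^ 0 * (((Y * X) ^ 0 * g2)) := by rw [f1y]
        _ = (Y * X) ^ 0 * g2 := by group
  have hsuf : g0 * (1 : P) = (Y * X) ^ 0 * g0 := by group
  have e1 : (Y * X) ^ 0 * (g2 * Y) * ((1 : P)) = g0 := by
    calc (Y * X) ^ 0 * (g2 * Y) * ((1 : P)) = (g0 * (Y * (Y))) * (Y * ((1 : P))) := by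
          rw [hpre]; group
      _ = g0 * (Y * (Y * (Y))) := by group
      _ = g0 * 1 := by rw [relYw]
      _ = g0 := mul_one _
  have e2 : (Y * X) ^ 0 * ((Y * X) ^ 0 * g0) * ((1 : P)) = g0 := by
    calc (Y * X) ^ 0 * ((Y * X) ^ 0 * g0) * ((1 : P)) = (Y*X) ^ 0 * (g0 * ((1 : P))) := by group
      _ = (Y*X) ^ 0 * ((Y * X) ^ 0 * g0) := by rw [hsuf]
      _ = ((Y*X) ^ 5) ^ 0 * g0 := by group
      _ = g0 := by rw [relZ5, one_pow, one_mul]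
  have e3 := e1.trans e2.symm
  have e4 := mul_right_cancel e3
  exact mul_left_cancel e4

lemma f2x : g2 * X = (Y * X) ^ 0 * g3 := by
  show (Y * Y) * X = (Y * X) ^ 0 * (Y * Y * X)
  group

lemma f3x : g3 * X = (Y * X) ^ 0 * g2 := by
  have hpre : g2 * (X) = (Y * X) ^ 0 * g3 := by
      calc g2 * (X)
        _ = (Y * X) ^ 0 * ((g2 * X)) := by group
        _ = (Y * X) ^ 0 * (((Y * X) ^ 0 * g3)) := by rw [f2x]
        _ = (Y * X) ^ 0 * g3 := by group
  have hsuf : g2 * (1 : P) = (Y * X) ^ 0 * g2 := by group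
  have e1 : (Y * X) ^ 0 * (g3 * X) * ((1 : P)) = g2 := by
    calc (Y * X) ^ 0 * (g3 * X) * ((1 : P)) = (g2 * (X)) * (X * ((1 : P))) := by
          rw [hpre]; group
      _ = g2 * (X * (X)) := by group
      _ = g2 * 1 := by rw [relXw]
      _ = g2 := mul_one _
  have e2 : (Y * X) ^ 0 * ((Y * X) ^ 0 * g2) * ((1 : P)) = g2 := by
    calc (Y * X) ^ 0 * ((Y * X) ^ 0 * g2) * ((1 : P)) = (Y*X) ^ 0 * (g2 * ((1 : P))) := by group
      _ = (Y*X) ^ 0 * ((Y * X) ^ 0 * g2) := by rw [hsuf]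
      _ = ((Y*X) ^ 5) ^ 0 * g2 := by group
      _ = g2 := by rw [relZ5, one_pow, one_mul]
  have e3 := e1.trans e2.symm
  have e4 := mul_right_cancel e3
  exact mul_left_cancel e4

lemma f3y : g3 * Y = (Y * X) ^ 0 * g4 := by
  show (Y * Y * X) * Y = (Y * X) ^ 0 * (Y * Y * X * Y)
  group

lemma f4x : g4 * X = (Y * X) ^ 0 * g5 := by
  show (Y * Y * X * Y) * X = (Y * X) ^ 0 * (Y * Y * X * Y * X)
  group

lemma f5x : g5 * X = (Y * X) ^ 0 * g4 := by
  have hpre : g4 * (X) = (Y * X) ^ 0 * g5 := by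
      calc g4 * (X)
        _ = (Y * X) ^ 0 * ((g4 * X)) := by group
        _ = (Y * X) ^ 0 * (((Y * X) ^ 0 * g5)) := by rw [f4x]
        _ = (Y * X) ^ 0 * g5 := by group
  have hsuf : g4 * (1 : P) = (Y * X) ^ 0 * g4 := by group
  have e1 : (Y * X) ^ 0 * (g5 * X) * ((1 : P)) = g4 := by
    calc (Y * X) ^ 0 * (g5 * X) * ((1 : P)) = (g4 * (X)) * (X * ((1 : P))) := by
          rw [hpre]; group
      _ = g4 * (X * (X)) := by group
      _ = g4 * 1 := by rw [relXw]
      _ = g4 := mul_one _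
  have e2 : (Y * X) ^ 0 * ((Y * X) ^ 0 * g4) * ((1 : P)) = g4 := by
    calc (Y * X) ^ 0 * ((Y * X) ^ 0 * g4) * ((1 : P)) = (Y*X) ^ 0 * (g4 * ((1 : P))) := by group
      _ = (Y*X) ^ 0 * ((Y * X) ^ 0 * g4) := by rw [hsuf]
      _ = ((Y*X) ^ 5) ^ 0 * g4 := by group
      _ = g4 := by rw [relZ5, one_pow, one_mul]
  have e3 := e1.trans e2.symm
  have e4 := mul_right_cancel e3
  exact mul_left_cancel e4

lemma f4y : g4 * Y = (Y * X) ^ 0 * g6 := by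
  show (Y * Y * X * Y) * Y = (Y * X) ^ 0 * (Y * Y * X * Y * Y)
  group

lemma f6y : g6 * Y = (Y * X) ^ 0 * g3 := by
  have hpre : g3 * (Y * (Y)) = (Y * X) ^ 0 * g6 := by
      calc g3 * (Y * (Y))
        _ = (Y * X) ^ 0 * ((g3 * Y) * (Y)) := by group
        _ = (Y * X) ^ 0 * (((Y * X) ^ 0 * g4) * (Y)) := by rw [f3y]
        _ = (Y * X) ^ 0 * ((g4 * Y)) := by group
        _ = (Y * X) ^ 0 * (((Y * X) ^ 0 * g6)) := by rw [f4y]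
        _ = (Y * X) ^ 0 * g6 := by group
  have hsuf : g3 * (1 : P) = (Y * X) ^ 0 * g3 := by group
  have e1 : (Y * X) ^ 0 * (g6 * Y) * ((1 : P)) = g3 := by
    calc (Y * X) ^ 0 * (g6 * Y) * ((1 : P)) = (g3 * (Y * (Y))) * (Y * ((1 : P))) := by
          rw [hpre]; group
      _ = g3 * (Y * (Y * (Y))) := by group
      _ = g3 * 1 := by rw [relYw]
      _ = g3 := mul_one _
  have e2 : (Y * X) ^ 0 * ((Y * X) ^ 0 * g3) * ((1 : P)) = g3 := by
    calc (Y * X) ^ 0 * ((Y * X) ^ 0 * g3) * ((1 : P)) = (Y*X) ^ 0 * (g3 * ((1 : P))) := by group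
      _ = (Y*X) ^ 0 * ((Y * X) ^ 0 * g3) := by rw [hsuf]
      _ = ((Y*X) ^ 5) ^ 0 * g3 := by group
      _ = g3 := by rw [relZ5, one_pow, one_mul]
  have e3 := e1.trans e2.symm
  have e4 := mul_right_cancel e3
  exact mul_left_cancel e4

lemma f5y : g5 * Y = (Y * X) ^ 0 * g7 := by
  show (Y * Y * X * Y * X) * Y = (Y * X) ^ 0 * (Y * Y * X * Y * X * Y)
  group

lemma f7x : g7 * X = (Y * X) ^ 1 * g6 := by
  have hpre : g1 * (Y * (X * (Y * (X * (Y))))) = (Y * X) ^ 0 * g7 := by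
      calc g1 * (Y * (X * (Y * (X * (Y)))))
        _ = (Y * X) ^ 0 * ((g1 * Y) * (X * (Y * (X * (Y))))) := by group
        _ = (Y * X) ^ 0 * (((Y * X) ^ 0 * g2) * (X * (Y * (X * (Y))))) := by rw [f1y]
        _ = (Y * X) ^ 0 * ((g2 * X) * (Y * (X * (Y)))) := by group
        _ = (Y * X) ^ 0 * (((Y * X) ^ 0 * g3) * (Y * (X * (Y)))) := by rw [f2x]
        _ = (Y * X) ^ 0 * ((g3 * Y) * (X * (Y))) := by group
        _ = (Y * X) ^ 0 * (((Y * X) ^ 0 * g4) * (X * (Y))) := by rw [f3y]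
        _ = (Y * X) ^ 0 * ((g4 * X) * (Y)) := by group
        _ = (Y * X) ^ 0 * (((Y * X) ^ 0 * g5) * (Y)) := by rw [f4x]
        _ = (Y * X) ^ 0 * ((g5 * Y)) := by group
        _ = (Y * X) ^ 0 * (((Y * X) ^ 0 * g7)) := by rw [f5y]
        _ = (Y * X) ^ 0 * g7 := by group
  have hsuf : g6 * (Y * (X * (Y * (X)))) = (Y * X) ^ 4 * g1 := by
      calc g6 * (Y * (X * (Y * (X))))
        _ = (Y * X) ^ 0 * ((g6 * Y) * (X * (Y * (X)))) := by group
        _ = (Y * X) ^ 0 * (((Y * X) ^ 0 * g3) * (X * (Y * (X)))) := by rw [f6y]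
        _ = (Y * X) ^ 0 * ((g3 * X) * (Y * (X))) := by group
        _ = (Y * X) ^ 0 * (((Y * X) ^ 0 * g2) * (Y * (X))) := by rw [f3x]
        _ = (Y * X) ^ 0 * ((g2 * Y) * (X)) := by group
        _ = (Y * X) ^ 0 * (((Y * X) ^ 0 * g0) * (X)) := by rw [f2y]
        _ = (Y * X) ^ 0 * ((g0 * X)) := by group
        _ = (Y * X) ^ 0 * (((Y * X) ^ 4 * g1)) := by rw [f0x]
        _ = (Y * X) ^ 4 * g1 := by group
  have e1 : (Y * X) ^ 0 * (g7 * X) * (Y * (X * (Y * (X)))) = g1 := by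
    calc (Y * X) ^ 0 * (g7 * X) * (Y * (X * (Y * (X)))) = (g1 * (Y * (X * (Y * (X * (Y)))))) * (X * (Y * (X * (Y * (X))))) := by
          rw [hpre]; group
      _ = g1 * (Y * (X * (Y * (X * (Y * (X * (Y * (X * (Y * (X)))))))))) := by group
      _ = g1 * 1 := by rw [relZw]
      _ = g1 := mul_one _
  have e2 : (Y * X) ^ 0 * ((Y * X) ^ 1 * g6) * (Y * (X * (Y * (X)))) = g1 := by
    calc (Y * X) ^ 0 * ((Y * X) ^ 1 * g6) * (Y * (X * (Y * (X)))) = (Y*X) ^ 1 * (g6 * (Y * (X * (Y * (X))))) := by group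
      _ = (Y*X) ^ 1 * ((Y * X) ^ 4 * g1) := by rw [hsuf]
      _ = ((Y*X) ^ 5) ^ 1 * g1 := by group
      _ = g1 := by rw [relZ5, one_pow, one_mul]
  have e3 := e1.trans e2.symm
  have e4 := mul_right_cancel e3
  exact mul_left_cancel e4

lemma f6x : g6 * X = (Y * X) ^ 4 * g7 := by
  have hpre : g6 * (1 : P) = (Y * X) ^ 0 * g6 := by group
  have hsuf : g7 * (X) = (Y * X) ^ 1 * g6 := by
      calc g7 * (X)
        _ = (Y * X) ^ 0 * ((g7 * X)) := by group
        _ = (Y * X) ^ 0 * (((Y * X) ^ 1 * g6)) := by rw [f7x]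
        _ = (Y * X) ^ 1 * g6 := by group
  have e1 : (Y * X) ^ 0 * (g6 * X) * (X) = g6 := by
    calc (Y * X) ^ 0 * (g6 * X) * (X) = (g6 * ((1 : P))) * (X * (X)) := by
          rw [hpre]; group
      _ = g6 * (X * (X)) := by group
      _ = g6 * 1 := by rw [relXw]
      _ = g6 := mul_one _
  have e2 : (Y * X) ^ 0 * ((Y * X) ^ 4 * g7) * (X) = g6 := by
    calc (Y * X) ^ 0 * ((Y * X) ^ 4 * g7) * (X) = (Y*X) ^ 4 * (g7 * (X)) := by group
      _ = (Y*X) ^ 4 * ((Y * X) ^ 1 * g6) := by rw [hsuf]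
      _ = ((Y*X) ^ 5) ^ 1 * g6 := by group
      _ = g6 := by rw [relZ5, one_pow, one_mul]
  have e3 := e1.trans e2.symm
  have e4 := mul_right_cancel e3
  exact mul_left_cancel e4

lemma f7y : g7 * Y = (Y * X) ^ 0 * g8 := by
  show (Y * Y * X * Y * X * Y) * Y = (Y * X) ^ 0 * (Y * Y * X * Y * X * Y * Y)
  group

lemma f8y : g8 * Y = (Y * X) ^ 0 * g5 := by
  have hpre : g5 * (Y * (Y)) = (Y * X) ^ 0 * g8 := by
      calc g5 * (Y * (Y))
        _ = (Y * X) ^ 0 * ((g5 * Y) * (Y)) := by group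
        _ = (Y * X) ^ 0 * (((Y * X) ^ 0 * g7) * (Y)) := by rw [f5y]
        _ = (Y * X) ^ 0 * ((g7 * Y)) := by group
        _ = (Y * X) ^ 0 * (((Y * X) ^ 0 * g8)) := by rw [f7y]
        _ = (Y * X) ^ 0 * g8 := by group
  have hsuf : g5 * (1 : P) = (Y * X) ^ 0 * g5 := by group
  have e1 : (Y * X) ^ 0 * (g8 * Y) * ((1 : P)) = g5 := by
    calc (Y * X) ^ 0 * (g8 * Y) * ((1 : P)) = (g5 * (Y * (Y))) * (Y * ((1 : P))) := by
          rw [hpre]; group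
      _ = g5 * (Y * (Y * (Y))) := by group
      _ = g5 * 1 := by rw [relYw]
      _ = g5 := mul_one _
  have e2 : (Y * X) ^ 0 * ((Y * X) ^ 0 * g5) * ((1 : P)) = g5 := by
    calc (Y * X) ^ 0 * ((Y * X) ^ 0 * g5) * ((1 : P)) = (Y*X) ^ 0 * (g5 * ((1 : P))) := by group
      _ = (Y*X) ^ 0 * ((Y * X) ^ 0 * g5) := by rw [hsuf]
      _ = ((Y*X) ^ 5) ^ 0 * g5 := by group
      _ = g5 := by rw [relZ5, one_pow, one_mul]
  have e3 := e1.trans e2.symm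
  have e4 := mul_right_cancel e3
  exact mul_left_cancel e4

lemma f8x : g8 * X = (Y * X) ^ 0 * g9 := by
  show (Y * Y * X * Y * X * Y * Y) * X = (Y * X) ^ 0 * (Y * Y * X * Y * X * Y * Y * X)
  group

lemma f9x : g9 * X = (Y * X) ^ 0 * g8 := by
  have hpre : g8 * (X) = (Y * X) ^ 0 * g9 := by
      calc g8 * (X)
        _ = (Y * X) ^ 0 * ((g8 * X)) := by group
        _ = (Y * X) ^ 0 * (((Y * X) ^ 0 * g9)) := by rw [f8x]
        _ = (Y * X) ^ 0 * g9 := by group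
  have hsuf : g8 * (1 : P) = (Y * X) ^ 0 * g8 := by group
  have e1 : (Y * X) ^ 0 * (g9 * X) * ((1 : P)) = g8 := by
    calc (Y * X) ^ 0 * (g9 * X) * ((1 : P)) = (g8 * (X)) * (X * ((1 : P))) := by
          rw [hpre]; group
      _ = g8 * (X * (X)) := by group
      _ = g8 * 1 := by rw [relXw]
      _ = g8 := mul_one _
  have e2 : (Y * X) ^ 0 * ((Y * X) ^ 0 * g8) * ((1 : P)) = g8 := by
    calc (Y * X) ^ 0 * ((Y * X) ^ 0 * g8) * ((1 : P)) = (Y*X) ^ 0 * (g8 * ((1 : P))) := by group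
      _ = (Y*X) ^ 0 * ((Y * X) ^ 0 * g8) := by rw [hsuf]
      _ = ((Y*X) ^ 5) ^ 0 * g8 := by group
      _ = g8 := by rw [relZ5, one_pow, one_mul]
  have e3 := e1.trans e2.symm
  have e4 := mul_right_cancel e3
  exact mul_left_cancel e4

lemma f9y : g9 * Y = (Y * X) ^ 0 * g10 := by
  show (Y * Y * X * Y * X * Y * Y * X) * Y = (Y * X) ^ 0 * (Y * Y * X * Y * X * Y * Y * X * Y)
  group

lemma f10x : g10 * X = (Y * X) ^ 0 * g11 := by
  show (Y * Y * X * Y * X * Y * Y * X * Y) * X = (Y * X) ^ 0 * (Y * Y * X * Y * X * Y * Y * X * Y * X)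
  group

lemma f11x : g11 * X = (Y * X) ^ 0 * g10 := by
  have hpre : g10 * (X) = (Y * X) ^ 0 * g11 := by
      calc g10 * (X)
        _ = (Y * X) ^ 0 * ((g10 * X)) := by group
        _ = (Y * X) ^ 0 * (((Y * X) ^ 0 * g11)) := by rw [f10x]
        _ = (Y * X) ^ 0 * g11 := by group
  have hsuf : g10 * (1 : P) = (Y * X) ^ 0 * g10 := by group
  have e1 : (Y * X) ^ 0 * (g11 * X) * ((1 : P)) = g10 := by
    calc (Y * X) ^ 0 * (g11 * X) * ((1 : P)) = (g10 * (X)) * (X * ((1 : P))) := by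
          rw [hpre]; group
      _ = g10 * (X * (X)) := by group
      _ = g10 * 1 := by rw [relXw]
      _ = g10 := mul_one _
  have e2 : (Y * X) ^ 0 * ((Y * X) ^ 0 * g10) * ((1 : P)) = g10 := by
    calc (Y * X) ^ 0 * ((Y * X) ^ 0 * g10) * ((1 : P)) = (Y*X) ^ 0 * (g10 * ((1 : P))) := by group
      _ = (Y*X) ^ 0 * ((Y * X) ^ 0 * g10) := by rw [hsuf]
      _ = ((Y*X) ^ 5) ^ 0 * g10 := by group
      _ = g10 := by rw [relZ5, one_pow, one_mul]
  have e3 := e1.trans e2.symm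
  have e4 := mul_right_cancel e3
  exact mul_left_cancel e4

lemma f11y : g11 * Y = (Y * X) ^ 1 * g9 := by
  have hpre : g4 * (Y * (X * (Y * (X * (Y * (X)))))) = (Y * X) ^ 4 * g11 := by
      calc g4 * (Y * (X * (Y * (X * (Y * (X))))))
        _ = (Y * X) ^ 0 * ((g4 * Y) * (X * (Y * (X * (Y * (X)))))) := by group
        _ = (Y * X) ^ 0 * (((Y * X) ^ 0 * g6) * (X * (Y * (X * (Y * (X)))))) := by rw [f4y]
        _ = (Y * X) ^ 0 * ((g6 * X) * (Y * (X * (Y * (X))))) := by group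
        _ = (Y * X) ^ 0 * (((Y * X) ^ 4 * g7) * (Y * (X * (Y * (X))))) := by rw [f6x]
        _ = (Y * X) ^ 4 * ((g7 * Y) * (X * (Y * (X)))) := by group
        _ = (Y * X) ^ 4 * (((Y * X) ^ 0 * g8) * (X * (Y * (X)))) := by rw [f7y]
        _ = (Y * X) ^ 4 * ((g8 * X) * (Y * (X))) := by group
        _ = (Y * X) ^ 4 * (((Y * X) ^ 0 * g9) * (Y * (X))) := by rw [f8x]
        _ = (Y * X) ^ 4 * ((g9 * Y) * (X)) := by group
        _ = (Y * X) ^ 4 * (((Y * X) ^ 0 * g10) * (X)) := by rw [f9y]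
        _ = (Y * X) ^ 4 * ((g10 * X)) := by group
        _ = (Y * X) ^ 4 * (((Y * X) ^ 0 * g11)) := by rw [f10x]
        _ = (Y * X) ^ 4 * g11 := by group
  have hsuf : g9 * (X * (Y * (X))) = (Y * X) ^ 0 * g4 := by
      calc g9 * (X * (Y * (X)))
        _ = (Y * X) ^ 0 * ((g9 * X) * (Y * (X))) := by group
        _ = (Y * X) ^ 0 * (((Y * X) ^ 0 * g8) * (Y * (X))) := by rw [f9x]
        _ = (Y * X) ^ 0 * ((g8 * Y) * (X)) := by group
        _ = (Y * X) ^ 0 * (((Y * X) ^ 0 * g5) * (X)) := by rw [f8y]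
        _ = (Y * X) ^ 0 * ((g5 * X)) := by group
        _ = (Y * X) ^ 0 * (((Y * X) ^ 0 * g4)) := by rw [f5x]
        _ = (Y * X) ^ 0 * g4 := by group
  have e1 : (Y * X) ^ 4 * (g11 * Y) * (X * (Y * (X))) = g4 := by
    calc (Y * X) ^ 4 * (g11 * Y) * (X * (Y * (X))) = (g4 * (Y * (X * (Y * (X * (Y * (X))))))) * (Y * (X * (Y * (X)))) := by
          rw [hpre]; group
      _ = g4 * (Y * (X * (Y * (X * (Y * (X * (Y * (X * (Y * (X)))))))))) := by group
      _ = g4 * 1 := by rw [relZw]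
      _ = g4 := mul_one _
  have e2 : (Y * X) ^ 4 * ((Y * X) ^ 1 * g9) * (X * (Y * (X))) = g4 := by
    calc (Y * X) ^ 4 * ((Y * X) ^ 1 * g9) * (X * (Y * (X))) = (Y*X) ^ 5 * (g9 * (X * (Y * (X)))) := by group
      _ = (Y*X) ^ 5 * ((Y * X) ^ 0 * g4) := by rw [hsuf]
      _ = ((Y*X) ^ 5) ^ 1 * g4 := by group
      _ = g4 := by rw [relZ5, one_pow, one_mul]
  have e3 := e1.trans e2.symm
  have e4 := mul_right_cancel e3
  exact mul_left_cancel e4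

lemma f10y : g10 * Y = (Y * X) ^ 4 * g11 := by
  have hpre : g9 * (Y) = (Y * X) ^ 0 * g10 := by
      calc g9 * (Y)
        _ = (Y * X) ^ 0 * ((g9 * Y)) := by group
        _ = (Y * X) ^ 0 * (((Y * X) ^ 0 * g10)) := by rw [f9y]
        _ = (Y * X) ^ 0 * g10 := by group
  have hsuf : g11 * (Y) = (Y * X) ^ 1 * g9 := by
      calc g11 * (Y)
        _ = (Y * X) ^ 0 * ((g11 * Y)) := by group
        _ = (Y * X) ^ 0 * (((Y * X) ^ 1 * g9)) := by rw [f11y]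
        _ = (Y * X) ^ 1 * g9 := by group
  have e1 : (Y * X) ^ 0 * (g10 * Y) * (Y) = g9 := by
    calc (Y * X) ^ 0 * (g10 * Y) * (Y) = (g9 * (Y)) * (Y * (Y)) := by
          rw [hpre]; group
      _ = g9 * (Y * (Y * (Y))) := by group
      _ = g9 * 1 := by rw [relYw]
      _ = g9 := mul_one _
  have e2 : (Y * X) ^ 0 * ((Y * X) ^ 4 * g11) * (Y) = g9 := by
    calc (Y * X) ^ 0 * ((Y * X) ^ 4 * g11) * (Y) = (Y*X) ^ 4 * (g11 * (Y)) := by group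
      _ = (Y*X) ^ 4 * ((Y * X) ^ 1 * g9) := by rw [hsuf]
      _ = ((Y*X) ^ 5) ^ 1 * g9 := by group
      _ = g9 := by rw [relZ5, one_pow, one_mul]
  have e3 := e1.trans e2.symm
  have e4 := mul_right_cancel e3
  exact mul_left_cancel e4

def jX : Fin 12 → Fin 12 := ![1, 0, 3, 2, 5, 4, 7, 6, 9, 8, 11, 10]
def aX : Fin 12 → ℕ := ![4, 1, 0, 0, 0, 0, 4, 1, 0, 0, 0, 0]
def jY : Fin 12 → Fin 12 := ![1, 2, 0, 4, 6, 7, 3, 8, 5, 10, 11, 9]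
def aY : Fin 12 → ℕ := ![0, 0, 0, 0, 0, 0, 0, 0, 0, 0, 4, 1]
def g : Fin 12 → P := ![g0, g1, g2, g3, g4, g5, g6, g7, g8, g9, g10, g11]

lemma tabX : ∀ i : Fin 12, g i * X = (Y * X) ^ (aX i) * g (jX i) := by
  intro i
  fin_cases i
  · exact f0x
  · exact f1x
  · exact f2x
  · exact f3x
  · exact f4x
  · exact f5x
  · exact f6x
  · exact f7x
  · exact f8x
  · exact f9x
  · exact f10x
  · exact f11x

lemma tabY : ∀ i : Fin 12, g i * Y = (Y * X) ^ (aY i) * g (jY i) := by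
  intro i
  fin_cases i
  · exact f0y
  · exact f1y
  · exact f2y
  · exact f3y
  · exact f4y
  · exact f5y
  · exact f6y
  · exact f7y
  · exact f8y
  · exact f9y
  · exact f10y
  · exact f11y

lemma keyX : ∀ (k : ℕ) (i : Fin 12), ∃ (k' : ℕ) (i' : Fin 12),
    (Y * X) ^ k * g i * X = (Y * X) ^ k' * g i' := by
  intro k i
  exact ⟨k + aX i, jX i, by rw [mul_assoc, tabX i, ← mul_assoc, ← pow_add]⟩

lemma keyY : ∀ (k : ℕ) (i : Fin 12), ∃ (k' : ℕ) (i' : Fin 12),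
    (Y * X) ^ k * g i * Y = (Y * X) ^ k' * g i' := by
  intro k i
  exact ⟨k + aY i, jY i, by rw [mul_assoc, tabY i, ← mul_assoc, ← pow_add]⟩

lemma range_of_eq : Set.range (PresentedGroup.of : Fin 2 → P) = {X, Y} := by
  ext p
  constructor
  · rintro ⟨i, rfl⟩
    fin_cases i
    · exact Or.inl rfl
    · exact Or.inr rfl
  · rintro (rfl | rfl)
    · exact ⟨0, rfl⟩
    · exact ⟨1, rfl⟩

lemma surj_aux : ∀ p : P, ∃ (k : ℕ) (i : Fin 12), p = (Y * X) ^ k * g i := by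
  intro p
  have hmem : p ∈ (Subgroup.closure ({X, Y} : Set P)).toSubmonoid := by
    have htop : Subgroup.closure ({X, Y} : Set P) = ⊤ := by
      rw [← range_of_eq]; exact PresentedGroup.closure_range_of icoRels
    rw [htop]; trivial
  rw [Subgroup.closure_toSubmonoid] at hmem
  have key : ∀ q ∈ Submonoid.closure (({X, Y} : Set P) ∪ ({X, Y} : Set P)⁻¹),
      ∀ (k : ℕ) (i : Fin 12), ∃ (k' : ℕ) (i' : Fin 12),
        (Y * X) ^ k * g i * q = (Y * X) ^ k' * g i' := by
    intro q hq
    induction hq using Submonoid.closure_induction with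
    | one => exact fun k i => ⟨k, i, by rw [mul_one]⟩
    | mul a b _ _ ha hb =>
      intro k i
      obtain ⟨k', i', h1⟩ := ha k i
      obtain ⟨k'', i'', h2⟩ := hb k' i'
      exact ⟨k'', i'', by rw [← mul_assoc, h1, h2]⟩
    | mem u hu =>
      rcases hu with (rfl | rfl) | hu'
      · exact keyX
      · exact keyY
      · rw [Set.mem_inv] at hu'
        simp only [Set.mem_insert_iff, Set.mem_singleton_iff] at hu'
        have huu : u = X⁻¹ ∨ u = Y⁻¹ := by
          rcases hu' with h | h
          · exact Or.inl (by rw [← h, inv_inv])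
          · exact Or.inr (by rw [← h, inv_inv])
        rcases huu with rfl | rfl
        · rw [Xinv]; exact keyX
        · rw [Yinv]
          intro k i
          obtain ⟨k', i', h1⟩ := keyY k i
          obtain ⟨k'', i'', h2⟩ := keyY k' i'
          refine ⟨k'', i'', ?_⟩
          rw [← mul_assoc, h1, h2]
  obtain ⟨k, i, h⟩ := key p hmem 0 0
  have h0 : (Y * X) ^ 0 * g 0 = 1 := by
    show (Y * X) ^ 0 * (1 : P) = 1
    rw [pow_zero, mul_one]
  rw [h0, one_mul] at h
  exact ⟨k, i, h⟩

def F : Fin 5 × Fin 12 → P := fun ki => (Y * X) ^ (ki.1 : ℕ) * g ki.2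

lemma F_surjective : Function.Surjective F := by
  intro p
  obtain ⟨k, i, rfl⟩ := surj_aux p
  refine ⟨(⟨k % 5, Nat.mod_lt _ (by norm_num)⟩, i), ?_⟩
  show (Y * X) ^ (k % 5) * g i = (Y * X) ^ k * g i
  rw [← pow_eq_pow_mod k relZ5]

instance : Finite P := Finite.of_surjective F F_surjective

lemma cardP_le : Nat.card P ≤ 60 :=
  le_trans (Nat.card_le_card_of_surjective F F_surjective) (by simp)
section MatrixLemmas
variable {α : ℂ} (h60 : α ^ 60 - 1 = 0) (h30 : α ^ 30 + 1 = 0)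
  (h20 : α ^ 40 + α ^ 20 + 1 = 0) (h12 : α ^ 48 + α ^ 36 + α ^ 24 + α ^ 12 + 1 = 0)
include h60 h30 h20 h12
lemma m1 : !![α * α ^ 29, 0; α * (α ^ 11 - 1), 1] * !![α * α ^ 29, 0; α * (α ^ 11 - 1), 1] = (1 : Matrix (Fin 2) (Fin 2) ℂ) := by
  ext i j
  fin_cases i <;> fin_cases j
  · simp only [Matrix.mul_apply, Fin.sum_univ_two, Matrix.cons_val', Matrix.cons_val_zero,
      Matrix.cons_val_one, Matrix.head_cons, Matrix.head_fin_const, Matrix.empty_val',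
      Matrix.cons_val_fin_one, Matrix.one_apply, Matrix.smul_apply, smul_eq_mul, Fin.zero_eta,
      Fin.mk_one, ne_eq, Fin.isValue, Matrix.of_apply, Matrix.cons_val_one, if_true, if_false,
      one_ne_zero, zero_ne_one, mul_one, mul_zero, reduceCtorEq]
    linear_combination ((1:ℂ)) * h60
  · simp only [Matrix.mul_apply, Fin.sum_univ_two, Matrix.cons_val', Matrix.cons_val_zero,
      Matrix.cons_val_one, Matrix.head_cons, Matrix.head_fin_const, Matrix.empty_val',
      Matrix.cons_val_fin_one, Matrix.one_apply, Matrix.smul_apply, smul_eq_mul, Fin.zero_eta,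
      Fin.mk_one, ne_eq, Fin.isValue, Matrix.of_apply, Matrix.cons_val_one, if_true, if_false,
      one_ne_zero, zero_ne_one, mul_one, mul_zero, reduceCtorEq]
    linear_combination (0:ℂ) * h60
  · simp only [Matrix.mul_apply, Fin.sum_univ_two, Matrix.cons_val', Matrix.cons_val_zero,
      Matrix.cons_val_one, Matrix.head_cons, Matrix.head_fin_const, Matrix.empty_val',
      Matrix.cons_val_fin_one, Matrix.one_apply, Matrix.smul_apply, smul_eq_mul, Fin.zero_eta,
      Fin.mk_one, ne_eq, Fin.isValue, Matrix.of_apply, Matrix.cons_val_one, if_true, if_false,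
      one_ne_zero, zero_ne_one, mul_one, mul_zero, reduceCtorEq]
    linear_combination (α ^ 11 - α ^ 13 + α ^ 15 - α ^ 17 + α ^ 21 - α ^ 22 + (-2:ℂ) * α ^ 23 + α ^ 24 + α ^ 25 - α ^ 26 - α ^ 27 + α ^ 28 - α ^ 29 - α ^ 32 - α ^ 33 + (2:ℂ) * α ^ 34 - α ^ 35 - α ^ 36 + α ^ 38 - α ^ 39 + α ^ 40 - α ^ 41 + α ^ 43 + α ^ 44 + (-2:ℂ) * α ^ 45 + α ^ 46 + α ^ 50 - α ^ 51 + α ^ 52 + α ^ 53 - α ^ 54 - α ^ 55 + (2:ℂ) * α ^ 56 + α ^ 62 - α ^ 64 + α ^ 66) * h30 + (-α + α ^ 3 - α ^ 5 + α ^ 7 - α ^ 11 + α ^ 12 + (2:ℂ) * α ^ 13 - α ^ 14 - α ^ 15 + α ^ 16 + α ^ 17 - α ^ 18 + α ^ 19 + α ^ 22 + α ^ 23 + (-2:ℂ) * α ^ 24 + α ^ 25 + α ^ 26 - α ^ 28 + α ^ 29 - α ^ 30 + α ^ 31 - α ^ 33 - α ^ 34 + (2:ℂ) * α ^ 35 -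 α ^ 36 - α ^ 40 + α ^ 41 - α ^ 42 - α ^ 43 + α ^ 44 + α ^ 45 + (-2:ℂ) * α ^ 46 - α ^ 52 + α ^ 54 - α ^ 56) * h20 + (-α ^ 3 + α ^ 5 - α ^ 7 - α ^ 13 + α ^ 14 + α ^ 15 - α ^ 16 - α ^ 17 + α ^ 18 + α ^ 24 - α ^ 26 + α ^ 28) * h12
  · simp only [Matrix.mul_apply, Fin.sum_univ_two, Matrix.cons_val', Matrix.cons_val_zero,
      Matrix.cons_val_one, Matrix.head_cons, Matrix.head_fin_const, Matrix.empty_val',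
      Matrix.cons_val_fin_one, Matrix.one_apply, Matrix.smul_apply, smul_eq_mul, Fin.zero_eta,
      Fin.mk_one, ne_eq, Fin.isValue, Matrix.of_apply, Matrix.cons_val_one, if_true, if_false,
      one_ne_zero, zero_ne_one, mul_one, mul_zero, reduceCtorEq]
    linear_combination (0:ℂ) * h60

lemma m2 : !![α ^ 29 * (α ^ 11 - 1) + 1, α ^ 29 * (1 - α ^ 29); 1 - α ^ 11, α ^ 29] * !![α ^ 29 * (α ^ 11 - 1) + 1, α ^ 29 * (1 - α ^ 29); 1 - α ^ 11, α ^ 29] = !![(-α + α ^ 5 + α ^ 7 - α ^ 13 - α ^ 15), ((1:ℂ) + α - α ^ 4 - α ^ 5 - α ^ 6 - α ^ 7 + α ^ 12 + α ^ 13 + α ^ 14 + α ^ 15); ((1:ℂ) - α - α ^ 10), (α - α ^ 5 - α ^ 7 + α ^ 10 + α ^ 13 + α ^ 15)] := by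
  ext i j
  fin_cases i <;> fin_cases j
  · simp only [Matrix.mul_apply, Fin.sum_univ_two, Matrix.cons_val', Matrix.cons_val_zero,
      Matrix.cons_val_one, Matrix.head_cons, Matrix.head_fin_const, Matrix.empty_val',
      Matrix.cons_val_fin_one, Matrix.one_apply, Matrix.smul_apply, smul_eq_mul, Fin.zero_eta,
      Fin.mk_one, ne_eq, Fin.isValue, Matrix.of_apply, Matrix.cons_val_one, if_true, if_false,
      one_ne_zero, zero_ne_one, mul_one, mul_zero, reduceCtorEq]
    linear_combination (-α ^ 9 + α ^ 20) * h60 + (-α ^ 10 - α ^ 11 + α ^ 12 + α ^ 13 - α ^ 14 + α ^ 16 + α ^ 17 + α ^ 19 - α ^ 20 + (-2:ℂ) * α ^ 21 + (2:ℂ) * α ^ 22 + α ^ 23 - α ^ 24 - α ^ 25 + α ^ 26 + α ^ 28 + α ^ 29 - α ^ 30 - α ^ 31 + (2:ℂ) * α ^ 32 - α ^ 33 + α ^ 36 - α ^ 37 + α ^ 38 + α ^ 40 + α ^ 41 + (-2:ℂ) * α ^ 43 + (2:ℂ) * α ^ 44 + α ^ 48 - α ^ 49 + α ^ 50 + α ^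 51 - α ^ 52 - α ^ 53 + (2:ℂ) * α ^ 54 + α ^ 60 - α ^ 62 + α ^ 64) * h30 + ((1:ℂ) + α - α ^ 2 - α ^ 3 + α ^ 4 - α ^ 6 - α ^ 7 - α ^ 9 + α ^ 10 + (2:ℂ) * α ^ 11 + (-2:ℂ) * α ^ 12 - α ^ 13 + α ^ 14 + α ^ 15 - α ^ 16 - α ^ 18 - α ^ 19 + α ^ 20 + α ^ 21 + (-2:ℂ) * α ^ 22 + α ^ 23 - α ^ 26 + α ^ 27 - α ^ 28 - α ^ 30 - α ^ 31 + (2:ℂ) * α ^ 33 + (-2:ℂ) * α ^ 34 - α ^ 38 + α ^ 39 - α ^ 40 - α ^ 41 + α ^ 42 + α ^ 43 + (-2:ℂ) * α ^ 44 - α ^ 50 + α ^ 52 - α ^ 54) * h20 + (α ^ 2 + α ^ 3 - α ^ 4 - α ^ 5 + α ^ 6 - α ^ 11 + α ^ 12 + α ^ 13 - α ^ 14 - α ^ 15 + α ^ 16 + α ^ 22 - α ^ 24 + α ^ 26) * h12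
  · simp only [Matrix.mul_apply, Fin.sum_univ_two, Matrix.cons_val', Matrix.cons_val_zero,
      Matrix.cons_val_one, Matrix.head_cons, Matrix.head_fin_const, Matrix.empty_val',
      Matrix.cons_val_fin_one, Matrix.one_apply, Matrix.smul_apply, smul_eq_mul, Fin.zero_eta,
      Fin.mk_one, ne_eq, Fin.isValue, Matrix.of_apply, Matrix.cons_val_one, if_true, if_false,
      one_ne_zero, zero_ne_one, mul_one, mul_zero, reduceCtorEq]
    linear_combination (α ^ 9 - α ^ 38) * h60 + (α ^ 10 + α ^ 11 - α ^ 12 - α ^ 13 - α ^ 16 - α ^ 17 - α ^ 19 + α ^ 20 + (2:ℂ) * α ^ 21 - α ^ 23 + α ^ 25 - α ^ 29 - α ^ 30 + α ^ 31 + (2:ℂ) * α ^ 32 + α ^ 33 - α ^ 34 + α ^ 37 + α ^ 38 + (-3:ℂ) * α ^ 40 - α ^ 41 + (2:ℂ) * α ^ 42 + (2:ℂ) * α ^ 43 - α ^ 44 - α ^ 46 + α ^ 48 + α ^ 49 + (-2:ℂ) * α ^ 50 - α ^ 51 + α ^ 53 - α ^ 54 - α ^ 56 - α ^ 58 + (-2:ℂ)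 * α ^ 62 - α ^ 66 - α ^ 68 + α ^ 70 + (-2:ℂ) * α ^ 72 - α ^ 78 + α ^ 80 - α ^ 82) * h30 + ((-1:ℂ) - α + α ^ 2 + α ^ 3 + α ^ 6 + α ^ 7 + α ^ 9 - α ^ 10 + (-2:ℂ) * α ^ 11 + α ^ 13 - α ^ 15 + α ^ 19 + α ^ 20 - α ^ 21 + (-2:ℂ) * α ^ 22 - α ^ 23 + α ^ 24 - α ^ 27 - α ^ 28 + (3:ℂ) * α ^ 30 + α ^ 31 + (-2:ℂ) * α ^ 32 + (-2:ℂ) * α ^ 33 + α ^ 34 + α ^ 36 - α ^ 38 - α ^ 39 + (2:ℂ) * α ^ 40 + α ^ 41 - α ^ 43 + α ^ 44 + α ^ 46 + α ^ 48 + (2:ℂ) * α ^ 52 + α ^ 56 + α ^ 58 - α ^ 60 + (2:ℂ) * α ^ 62 + α ^ 68 - α ^ 70 + α ^ 72) * h20 + (-α ^ 2 - α ^ 3 + α ^ 4 + α ^ 5 + α ^ 11 - α ^ 13 + α ^ 15 - α ^ 20 + α ^ 22 - α ^ 24 - α ^ 30 + α ^ 32 - α ^ 34 - α ^ 40 + α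 ^ 42 - α ^ 44) * h12
  · simp only [Matrix.mul_apply, Fin.sum_univ_two, Matrix.cons_val', Matrix.cons_val_zero,
      Matrix.cons_val_one, Matrix.head_cons, Matrix.head_fin_const, Matrix.empty_val',
      Matrix.cons_val_fin_one, Matrix.one_apply, Matrix.smul_apply, smul_eq_mul, Fin.zero_eta,
      Fin.mk_one, ne_eq, Fin.isValue, Matrix.of_apply, Matrix.cons_val_one, if_true, if_false,
      one_ne_zero, zero_ne_one, mul_one, mul_zero, reduceCtorEq]
    linear_combination (-α ^ 11 + α ^ 13 - α ^ 15 + α ^ 17 - α ^ 20 + α ^ 22 + α ^ 23 - α ^ 24 + α ^ 26 + α ^ 29 - α ^ 30 + α ^ 31 + (2:ℂ) * α ^ 32 - α ^ 33 - α ^ 34 + (2:ℂ) * α ^ 35 + α ^ 36 - α ^ 37 + α ^ 38 + (2:ℂ) * α ^ 41 + α ^ 42 + (-3:ℂ) * α ^ 43 + α ^ 44 + (2:ℂ) * α ^ 45 - α ^ 47 + α ^ 48 - α ^ 49 + α ^ 50 - α ^ 52 - α ^ 53 + (2:ℂ) * α ^ 54 - α ^ 55 - α ^ 59 + α ^ 60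 - α ^ 61 - α ^ 62 + α ^ 63 + α ^ 64 + (-2:ℂ) * α ^ 65 - α ^ 71 + α ^ 73 - α ^ 75) * h30 + (α - α ^ 3 + α ^ 5 - α ^ 7 + α ^ 10 - α ^ 12 - α ^ 13 + α ^ 14 - α ^ 16 - α ^ 19 + α ^ 20 - α ^ 21 + (-2:ℂ) * α ^ 22 + α ^ 23 + α ^ 24 + (-2:ℂ) * α ^ 25 - α ^ 26 + α ^ 27 - α ^ 28 + (-2:ℂ) * α ^ 31 - α ^ 32 + (3:ℂ) * α ^ 33 - α ^ 34 + (-2:ℂ) * α ^ 35 + α ^ 37 - α ^ 38 + α ^ 39 - α ^ 40 + α ^ 42 + α ^ 43 + (-2:ℂ) * α ^ 44 + α ^ 45 + α ^ 49 - α ^ 50 + α ^ 51 + α ^ 52 - α ^ 53 - α ^ 54 + (2:ℂ) * α ^ 55 + α ^ 61 - α ^ 63 + α ^ 65) * h20 + (α ^ 3 - α ^ 5 + α ^ 7 + α ^ 12 - α ^ 14 + α ^ 16 + α ^ 22 - α ^ 23 - α ^ 24 + α ^ 25 + α ^ 26 - α ^ 27 - α ^ 33 + α ^ 35 - α ^ 37)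 * h12
  · simp only [Matrix.mul_apply, Fin.sum_univ_two, Matrix.cons_val', Matrix.cons_val_zero,
      Matrix.cons_val_one, Matrix.head_cons, Matrix.head_fin_const, Matrix.empty_val',
      Matrix.cons_val_fin_one, Matrix.one_apply, Matrix.smul_apply, smul_eq_mul, Fin.zero_eta,
      Fin.mk_one, ne_eq, Fin.isValue, Matrix.of_apply, Matrix.cons_val_one, if_true, if_false,
      one_ne_zero, zero_ne_one, mul_one, mul_zero, reduceCtorEq]
    linear_combination (α ^ 9) * h60 + (α ^ 11 - α ^ 13 - α ^ 17 - α ^ 19 + α ^ 20 + (2:ℂ) * α ^ 21 - α ^ 22 - α ^ 23 + α ^ 24 + α ^ 25 - α ^ 26 - α ^ 29 + α ^ 30 + α ^ 31 + (-2:ℂ) * α ^ 32 + α ^ 33 + α ^ 34 - α ^ 36 + α ^ 37 - α ^ 38 - α ^ 41 - α ^ 42 + (2:ℂ) * α ^ 43 - α ^ 44 - α ^ 48 + α ^ 49 - α ^ 50 - α ^ 51 + α ^ 52 + α ^ 53 + (-2:ℂ) * α ^ 54 - α ^ 60 + α ^ 62 - α ^ 64) * h30 + (-α + α ^ 3 +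 α ^ 7 + α ^ 9 - α ^ 10 + (-2:ℂ) * α ^ 11 + α ^ 12 + α ^ 13 - α ^ 14 - α ^ 15 + α ^ 16 + α ^ 19 - α ^ 20 - α ^ 21 + (2:ℂ) * α ^ 22 - α ^ 23 - α ^ 24 + α ^ 26 - α ^ 27 + α ^ 28 + α ^ 31 + α ^ 32 + (-2:ℂ) * α ^ 33 + α ^ 34 + α ^ 38 - α ^ 39 + α ^ 40 + α ^ 41 - α ^ 42 - α ^ 43 + (2:ℂ) * α ^ 44 + α ^ 50 - α ^ 52 + α ^ 54) * h20 + (-α ^ 3 + α ^ 5 + α ^ 11 - α ^ 12 - α ^ 13 + α ^ 14 + α ^ 15 - α ^ 16 - α ^ 22 + α ^ 24 - α ^ 26) * h12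

lemma m3 : !![(-α + α ^ 5 + α ^ 7 - α ^ 13 - α ^ 15), ((1:ℂ) + α - α ^ 4 - α ^ 5 - α ^ 6 - α ^ 7 + α ^ 12 + α ^ 13 + α ^ 14 + α ^ 15); ((1:ℂ) - α - α ^ 10), (α - α ^ 5 - α ^ 7 + α ^ 10 + α ^ 13 + α ^ 15)] * !![α ^ 29 * (α ^ 11 - 1) + 1, α ^ 29 * (1 - α ^ 29); 1 - α ^ 11, α ^ 29] = (1 : Matrix (Fin 2) (Fin 2) ℂ) := by
  ext i j
  fin_cases i <;> fin_cases j
  · simp only [Matrix.mul_apply, Fin.sum_univ_two, Matrix.cons_val', Matrix.cons_val_zero,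
      Matrix.cons_val_one, Matrix.head_cons, Matrix.head_fin_const, Matrix.empty_val',
      Matrix.cons_val_fin_one, Matrix.one_apply, Matrix.smul_apply, smul_eq_mul, Fin.zero_eta,
      Fin.mk_one, ne_eq, Fin.isValue, Matrix.of_apply, Matrix.cons_val_one, if_true, if_false,
      one_ne_zero, zero_ne_one, mul_one, mul_zero, reduceCtorEq]
    linear_combination (α ^ 14 + α ^ 21 - α ^ 22 - α ^ 23 - α ^ 26 - α ^ 27 + (-2:ℂ) * α ^ 28 + α ^ 30 + α ^ 31 + (-2:ℂ) * α ^ 32 + (-2:ℂ) * α ^ 38 - α ^ 41 + (2:ℂ) * α ^ 43 - α ^ 45 + (2:ℂ) * α ^ 46 + α ^ 49 - α ^ 50 + (-2:ℂ) * α ^ 51 + α ^ 52 + α ^ 53 - α ^ 55 + α ^ 56 + (-2:ℂ) * α ^ 57 + (2:ℂ) * α ^ 58 - α ^ 60 + α ^ 62 - α ^ 63 - α ^ 67 + α ^ 68 + (-2:ℂ) * α ^ 69 + α ^ 71 - α ^ 73 - α ^ 79) * h30 + (-α ^ 4 - α ^ 11 + α ^ 12 + α ^ 13 + α ^ 16 +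 α ^ 17 + (2:ℂ) * α ^ 18 - α ^ 20 - α ^ 21 + (2:ℂ) * α ^ 22 + (2:ℂ) * α ^ 28 + α ^ 31 + (-2:ℂ) * α ^ 33 + α ^ 35 + (-2:ℂ) * α ^ 36 - α ^ 39 + α ^ 40 + (2:ℂ) * α ^ 41 - α ^ 42 - α ^ 43 + α ^ 45 - α ^ 46 + (2:ℂ) * α ^ 47 + (-2:ℂ) * α ^ 48 + α ^ 50 - α ^ 52 + α ^ 53 + α ^ 57 - α ^ 58 + (2:ℂ) * α ^ 59 - α ^ 61 + α ^ 63 + α ^ 69) * h20 + (-α ^ 6 - α ^ 12 - α ^ 13 + α ^ 15 + α ^ 20 - α ^ 22 + α ^ 24 + α ^ 30 - α ^ 31 + α ^ 33 - α ^ 35 - α ^ 41) * h12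
  · simp only [Matrix.mul_apply, Fin.sum_univ_two, Matrix.cons_val', Matrix.cons_val_zero,
      Matrix.cons_val_one, Matrix.head_cons, Matrix.head_fin_const, Matrix.empty_val',
      Matrix.cons_val_fin_one, Matrix.one_apply, Matrix.smul_apply, smul_eq_mul, Fin.zero_eta,
      Fin.mk_one, ne_eq, Fin.isValue, Matrix.of_apply, Matrix.cons_val_one, if_true, if_false,
      one_ne_zero, zero_ne_one, mul_one, mul_zero, reduceCtorEq]
    linear_combination (-α ^ 3 - α ^ 5 + α ^ 11 + α ^ 13) * h60 + (α ^ 13 + (-2:ℂ) * α ^ 21 + α ^ 23 - α ^ 25 - α ^ 27 + α ^ 29 + (-3:ℂ) * α ^ 31 + (-2:ℂ) * α ^ 37 + α ^ 41 + (-2:ℂ) * α ^ 43 + (3:ℂ) * α ^ 45 + (-2:ℂ) * α ^ 49 + (4:ℂ) * α ^ 51 + (-2:ℂ) * α ^ 53 + (2:ℂ) * α ^ 55 + (3:ℂ) * α ^ 57 - α ^ 59 + (2:ℂ) * α ^ 61 + α ^ 63 + (2:ℂ) * α ^ 67 + α ^ 69 - α ^ 71 + (2:ℂ) * α ^ 73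 + α ^ 79 - α ^ 81 + α ^ 83) * h30 + (-α ^ 3 + (2:ℂ) * α ^ 11 - α ^ 13 + α ^ 15 + α ^ 17 - α ^ 19 + (3:ℂ) * α ^ 21 + (2:ℂ) * α ^ 27 - α ^ 31 + (2:ℂ) * α ^ 33 + (-3:ℂ) * α ^ 35 + (2:ℂ) * α ^ 39 + (-4:ℂ) * α ^ 41 + (2:ℂ) * α ^ 43 + (-2:ℂ) * α ^ 45 + (-3:ℂ) * α ^ 47 + α ^ 49 + (-2:ℂ) * α ^ 51 - α ^ 53 + (-2:ℂ) * α ^ 57 - α ^ 59 + α ^ 61 + (-2:ℂ) * α ^ 63 - α ^ 69 + α ^ 71 - α ^ 73) * h20 + (-α ^ 5 - α ^ 11 + α ^ 13 - α ^ 15 + α ^ 19 - α ^ 21 + α ^ 23 + α ^ 29 + α ^ 31 - α ^ 33 + α ^ 35 + α ^ 41 - α ^ 43 + α ^ 45) * h12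
  · simp only [Matrix.mul_apply, Fin.sum_univ_two, Matrix.cons_val', Matrix.cons_val_zero,
      Matrix.cons_val_one, Matrix.head_cons, Matrix.head_fin_const, Matrix.empty_val',
      Matrix.cons_val_fin_one, Matrix.one_apply, Matrix.smul_apply, smul_eq_mul, Fin.zero_eta,
      Fin.mk_one, ne_eq, Fin.isValue, Matrix.of_apply, Matrix.cons_val_one, if_true, if_false,
      one_ne_zero, zero_ne_one, mul_one, mul_zero, reduceCtorEq]
    linear_combination (-α ^ 10 + α ^ 12 - α ^ 14 + α ^ 15 + α ^ 16 - α ^ 20 + (3:ℂ) * α ^ 22 + (-2:ℂ) * α ^ 23 + (-2:ℂ) * α ^ 24 + α ^ 25 + α ^ 26 - α ^ 27 - α ^ 29 + (2:ℂ) * α ^ 31 + (2:ℂ) * α ^ 32 + (-4:ℂ) * α ^ 33 + α ^ 34 + α ^ 35 - α ^ 37 + α ^ 38 - α ^ 39 + α ^ 40 + α ^ 41 + (-2:ℂ) * α ^ 42 - α ^ 43 + (4:ℂ) * α ^ 44 + (-2:ℂ) * α ^ 45 - α ^ 46 + α ^ 47 - α ^ 49 + α ^ 50 - α ^ 51 +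 (-3:ℂ) * α ^ 52 + (2:ℂ) * α ^ 53 + (2:ℂ) * α ^ 54 + (-2:ℂ) * α ^ 55 - α ^ 58 + α ^ 59 + (-2:ℂ) * α ^ 61 + (2:ℂ) * α ^ 63 - α ^ 64 - α ^ 65 - α ^ 70 + α ^ 72 - α ^ 74) * h30 + ((1:ℂ) - α ^ 2 + α ^ 4 - α ^ 5 - α ^ 6 + α ^ 10 + (-3:ℂ) * α ^ 12 + (2:ℂ) * α ^ 13 + (2:ℂ) * α ^ 14 - α ^ 15 - α ^ 16 + α ^ 17 + α ^ 19 + (-2:ℂ) * α ^ 21 + (-2:ℂ) * α ^ 22 + (4:ℂ) * α ^ 23 - α ^ 24 - α ^ 25 + α ^ 27 - α ^ 28 + α ^ 29 - α ^ 30 - α ^ 31 + (2:ℂ) * α ^ 32 + α ^ 33 + (-4:ℂ) * α ^ 34 + (2:ℂ) * α ^ 35 + α ^ 36 - α ^ 37 + α ^ 39 - α ^ 40 + α ^ 41 + (3:ℂ) * α ^ 42 + (-2:ℂ) * α ^ 43 + (-2:ℂ) * α ^ 44 + (2:ℂ) * α ^ 45 + α ^ 48 - α ^ 49 + (2:ℂ)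 * α ^ 51 + (-2:ℂ) * α ^ 53 + α ^ 54 + α ^ 55 + α ^ 60 - α ^ 62 + α ^ 64) * h20 + (α ^ 2 - α ^ 4 + α ^ 6 - α ^ 7 + α ^ 12 - α ^ 13 + (-2:ℂ) * α ^ 14 + α ^ 15 + (2:ℂ) * α ^ 16 - α ^ 17 + α ^ 21 + (-2:ℂ) * α ^ 23 + (2:ℂ) * α ^ 25 - α ^ 27 - α ^ 32 + α ^ 34 - α ^ 36) * h12
  · simp only [Matrix.mul_apply, Fin.sum_univ_two, Matrix.cons_val', Matrix.cons_val_zero,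
      Matrix.cons_val_one, Matrix.head_cons, Matrix.head_fin_const, Matrix.empty_val',
      Matrix.cons_val_fin_one, Matrix.one_apply, Matrix.smul_apply, smul_eq_mul, Fin.zero_eta,
      Fin.mk_one, ne_eq, Fin.isValue, Matrix.of_apply, Matrix.cons_val_one, if_true, if_false,
      one_ne_zero, zero_ne_one, mul_one, mul_zero, reduceCtorEq]
    linear_combination (α ^ 8) * h60 + (α ^ 10 - α ^ 12 + α ^ 14 - α ^ 16 - α ^ 18 + (2:ℂ) * α ^ 20 + (-3:ℂ) * α ^ 22 + (2:ℂ) * α ^ 24 - α ^ 26 + (-2:ℂ) * α ^ 28 + (2:ℂ) * α ^ 30 + (-2:ℂ) * α ^ 32 + α ^ 36 - α ^ 38 - α ^ 39 - α ^ 40 + α ^ 41 + (3:ℂ) * α ^ 42 - α ^ 43 + (-2:ℂ) * α ^ 44 + α ^ 45 + (2:ℂ) * α ^ 46 + (2:ℂ) * α ^ 48 - α ^ 49 + (-4:ℂ) * α ^ 50 + (2:ℂ) * α ^ 51 + (4:ℂ) * α ^ 52 - α ^ 53 + (-2:ℂ) * α ^ 54 + α ^ 55 + α ^ 57 + (2:ℂ)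 * α ^ 58 + (-2:ℂ) * α ^ 60 + α ^ 61 + α ^ 63 - α ^ 66 + α ^ 67 + α ^ 69 + α ^ 70 - α ^ 71 + (-2:ℂ) * α ^ 72 + (2:ℂ) * α ^ 73 - α ^ 78 + α ^ 79 + α ^ 80 - α ^ 81 - α ^ 82 + α ^ 83) * h30 + ((-1:ℂ) + α ^ 2 - α ^ 4 + α ^ 6 + α ^ 8 + (-2:ℂ) * α ^ 10 + (3:ℂ) * α ^ 12 + (-2:ℂ) * α ^ 14 + α ^ 16 + (2:ℂ) * α ^ 18 + (-2:ℂ) * α ^ 20 + (2:ℂ) * α ^ 22 - α ^ 26 + α ^ 28 + α ^ 29 + α ^ 30 - α ^ 31 + (-3:ℂ) * α ^ 32 + α ^ 33 + (2:ℂ) * α ^ 34 - α ^ 35 + (-2:ℂ) * α ^ 36 + (-2:ℂ) * α ^ 38 + α ^ 39 + (4:ℂ) * α ^ 40 + (-2:ℂ) * α ^ 41 + (-4:ℂ) * α ^ 42 + α ^ 43 + (2:ℂ) * α ^ 44 - α ^ 45 - α ^ 47 + (-2:ℂ) * α ^ 48 + (2:ℂ) * α ^ 50 - α ^ 51 - α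 ^ 53 + α ^ 56 - α ^ 57 - α ^ 59 - α ^ 60 + α ^ 61 + (2:ℂ) * α ^ 62 + (-2:ℂ) * α ^ 63 + α ^ 68 - α ^ 69 - α ^ 70 + α ^ 71 + α ^ 72 - α ^ 73) * h20 + (-α ^ 2 + α ^ 4 - α ^ 6 + α ^ 10 + (-2:ℂ) * α ^ 12 + (2:ℂ) * α ^ 14 - α ^ 16 + α ^ 20 - α ^ 22 + α ^ 24 + α ^ 31 + α ^ 32 - α ^ 33 - α ^ 34 + α ^ 35 - α ^ 40 + α ^ 41 + α ^ 42 - α ^ 43 - α ^ 44 + α ^ 45) * h12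

lemma m4 : !![α ^ 29 * (α ^ 11 - 1) + 1, α ^ 29 * (1 - α ^ 29); 1 - α ^ 11, α ^ 29] * !![(-α + α ^ 5 + α ^ 7 - α ^ 13 - α ^ 15), ((1:ℂ) + α - α ^ 4 - α ^ 5 - α ^ 6 - α ^ 7 + α ^ 12 + α ^ 13 + α ^ 14 + α ^ 15); ((1:ℂ) - α - α ^ 10), (α - α ^ 5 - α ^ 7 + α ^ 10 + α ^ 13 + α ^ 15)] = (1 : Matrix (Fin 2) (Fin 2) ℂ) := by
  ext i j
  fin_cases i <;> fin_cases j
  · simp only [Matrix.mul_apply, Fin.sum_univ_two, Matrix.cons_val', Matrix.cons_val_zero,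
      Matrix.cons_val_one, Matrix.head_cons, Matrix.head_fin_const, Matrix.empty_val',
      Matrix.cons_val_fin_one, Matrix.one_apply, Matrix.smul_apply, smul_eq_mul, Fin.zero_eta,
      Fin.mk_one, ne_eq, Fin.isValue, Matrix.of_apply, Matrix.cons_val_one, if_true, if_false,
      one_ne_zero, zero_ne_one, mul_one, mul_zero, reduceCtorEq]
    linear_combination (α ^ 8) * h60 + (α ^ 10 + α ^ 11 - α ^ 12 - α ^ 13 + α ^ 14 - α ^ 16 - α ^ 17 - α ^ 18 + (2:ℂ) * α ^ 20 + α ^ 21 + (-3:ℂ) * α ^ 22 + (2:ℂ) * α ^ 24 - α ^ 26 + (-2:ℂ) * α ^ 28 + (2:ℂ) * α ^ 30 - α ^ 31 + (-2:ℂ) * α ^ 32 + (2:ℂ) * α ^ 33 - α ^ 35 + α ^ 36 - α ^ 38 - α ^ 40 + (-2:ℂ) * α ^ 41 + (3:ℂ) * α ^ 42 + α ^ 43 + (-2:ℂ) * α ^ 44 + (2:ℂ) * α ^ 46 - α ^ 47 + (2:ℂ) * α ^ 48 + (-4:ℂ) * α ^ 50 + α ^ 51 + (4:ℂ) * α ^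 52 + (-2:ℂ) * α ^ 53 + (-2:ℂ) * α ^ 54 - α ^ 57 + (2:ℂ) * α ^ 58 - α ^ 59 + (-2:ℂ) * α ^ 60 + (2:ℂ) * α ^ 61 - α ^ 63 - α ^ 66 - α ^ 69 + α ^ 70 + (-2:ℂ) * α ^ 72 + α ^ 73 - α ^ 78 + α ^ 80 - α ^ 81 - α ^ 82 + α ^ 83) * h30 + ((-1:ℂ) - α + α ^ 2 + α ^ 3 - α ^ 4 + α ^ 6 + α ^ 7 + α ^ 8 + (-2:ℂ) * α ^ 10 - α ^ 11 + (3:ℂ) * α ^ 12 + (-2:ℂ) * α ^ 14 + α ^ 16 + (2:ℂ) * α ^ 18 + (-2:ℂ) * α ^ 20 + α ^ 21 + (2:ℂ) * α ^ 22 + (-2:ℂ) * α ^ 23 + α ^ 25 - α ^ 26 + α ^ 28 + α ^ 30 + (2:ℂ) * α ^ 31 + (-3:ℂ) * α ^ 32 - α ^ 33 + (2:ℂ) * α ^ 34 + (-2:ℂ) * α ^ 36 + α ^ 37 + (-2:ℂ) * α ^ 38 + (4:ℂ) * α ^ 40 - α ^ 41 + (-4:ℂ) * α ^ 42 + (2:ℂ)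 * α ^ 43 + (2:ℂ) * α ^ 44 + α ^ 47 + (-2:ℂ) * α ^ 48 + α ^ 49 + (2:ℂ) * α ^ 50 + (-2:ℂ) * α ^ 51 + α ^ 53 + α ^ 56 + α ^ 59 - α ^ 60 + (2:ℂ) * α ^ 62 - α ^ 63 + α ^ 68 - α ^ 70 + α ^ 71 + α ^ 72 - α ^ 73) * h20 + (-α ^ 2 - α ^ 3 + α ^ 4 + α ^ 5 - α ^ 6 + α ^ 10 + (-2:ℂ) * α ^ 12 + (2:ℂ) * α ^ 14 - α ^ 16 + α ^ 20 - α ^ 21 - α ^ 22 + α ^ 23 + α ^ 24 - α ^ 25 + α ^ 32 - α ^ 34 - α ^ 40 + α ^ 42 - α ^ 43 - α ^ 44 + α ^ 45) * h12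
  · simp only [Matrix.mul_apply, Fin.sum_univ_two, Matrix.cons_val', Matrix.cons_val_zero,
      Matrix.cons_val_one, Matrix.head_cons, Matrix.head_fin_const, Matrix.empty_val',
      Matrix.cons_val_fin_one, Matrix.one_apply, Matrix.smul_apply, smul_eq_mul, Fin.zero_eta,
      Fin.mk_one, ne_eq, Fin.isValue, Matrix.of_apply, Matrix.cons_val_one, if_true, if_false,
      one_ne_zero, zero_ne_one, mul_one, mul_zero, reduceCtorEq]
    linear_combination (α ^ 3 + α ^ 5 - α ^ 8 - α ^ 11 - α ^ 13) * h60 + (-α ^ 10 - α ^ 11 + α ^ 12 + α ^ 16 + α ^ 17 + α ^ 18 + (-2:ℂ) * α ^ 20 + α ^ 21 + α ^ 22 - α ^ 23 - α ^ 24 + α ^ 25 + α ^ 27 + α ^ 28 - α ^ 29 - α ^ 30 + (4:ℂ) * α ^ 31 - α ^ 32 + (-2:ℂ) * α ^ 33 + α ^ 35 - α ^ 36 + (2:ℂ) * α ^ 37 - α ^ 38 - α ^ 39 + (2:ℂ) * α ^ 40 + (2:ℂ) * α ^ 41 + (-3:ℂ) * α ^ 42 + α ^ 44 + (-2:ℂ)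 * α ^ 45 + α ^ 47 + (-2:ℂ) * α ^ 48 + α ^ 49 + (2:ℂ) * α ^ 50 + (-3:ℂ) * α ^ 51 - α ^ 52 + (3:ℂ) * α ^ 53 + α ^ 54 - α ^ 55 + (2:ℂ) * α ^ 56 - α ^ 57 + (2:ℂ) * α ^ 59 + (-3:ℂ) * α ^ 61 + α ^ 62 + α ^ 63 + α ^ 66 - α ^ 67 + (2:ℂ) * α ^ 68 + α ^ 69 - α ^ 70 + α ^ 72 - α ^ 73 + α ^ 78 + α ^ 81 - α ^ 83) * h30 + ((1:ℂ) + α - α ^ 2 - α ^ 6 - α ^ 7 - α ^ 8 + (2:ℂ) * α ^ 10 - α ^ 11 - α ^ 12 + α ^ 13 + α ^ 14 - α ^ 15 - α ^ 17 - α ^ 18 + α ^ 19 + α ^ 20 + (-4:ℂ) * α ^ 21 + α ^ 22 + (2:ℂ) * α ^ 23 - α ^ 25 + α ^ 26 + (-2:ℂ) * α ^ 27 + α ^ 28 + α ^ 29 + (-2:ℂ) * α ^ 30 + (-2:ℂ) * α ^ 31 + (3:ℂ) * α ^ 32 - α ^ 34 + (2:ℂ) * α ^ 35 - α ^ 37 +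 (2:ℂ) * α ^ 38 - α ^ 39 + (-2:ℂ) * α ^ 40 + (3:ℂ) * α ^ 41 + α ^ 42 + (-3:ℂ) * α ^ 43 - α ^ 44 + α ^ 45 + (-2:ℂ) * α ^ 46 + α ^ 47 + (-2:ℂ) * α ^ 49 + (3:ℂ) * α ^ 51 - α ^ 52 - α ^ 53 - α ^ 56 + α ^ 57 + (-2:ℂ) * α ^ 58 - α ^ 59 + α ^ 60 - α ^ 62 + α ^ 63 - α ^ 68 - α ^ 71 + α ^ 73) * h20 + (α ^ 2 + α ^ 3 - α ^ 4 - α ^ 10 + α ^ 11 + α ^ 12 - α ^ 13 - α ^ 14 + α ^ 15 - α ^ 19 + (2:ℂ) * α ^ 21 + (-2:ℂ) * α ^ 23 + α ^ 25 - α ^ 29 + α ^ 30 - α ^ 32 + α ^ 34 + α ^ 40 + α ^ 43 - α ^ 45) * h12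
  · simp only [Matrix.mul_apply, Fin.sum_univ_two, Matrix.cons_val', Matrix.cons_val_zero,
      Matrix.cons_val_one, Matrix.head_cons, Matrix.head_fin_const, Matrix.empty_val',
      Matrix.cons_val_fin_one, Matrix.one_apply, Matrix.smul_apply, smul_eq_mul, Fin.zero_eta,
      Fin.mk_one, ne_eq, Fin.isValue, Matrix.of_apply, Matrix.cons_val_one, if_true, if_false,
      one_ne_zero, zero_ne_one, mul_one, mul_zero, reduceCtorEq]
    linear_combination (α ^ 11 - α ^ 13 - α ^ 17 + α ^ 21 - α ^ 22 + α ^ 24 + α ^ 28 - α ^ 31 - α ^ 32 + (2:ℂ) * α ^ 33 - α ^ 35 + α ^ 40 + (-2:ℂ) * α ^ 41 + α ^ 43 - α ^ 44 - α ^ 47 + α ^ 52 - α ^ 53 - α ^ 54 - α ^ 59 + α ^ 61 - α ^ 63) * h30 + (-α + α ^ 3 + α ^ 7 - α ^ 11 + α ^ 12 - α ^ 14 - α ^ 18 + α ^ 21 + α ^ 22 + (-2:ℂ) * α ^ 23 + α ^ 25 - α ^ 30 + (2:ℂ) * α ^ 31 - α ^ 33 + α ^ 34 + α ^ 37 - α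 ^ 42 + α ^ 43 + α ^ 44 + α ^ 49 - α ^ 51 + α ^ 53) * h20 + (-α ^ 3 + α ^ 5 + α ^ 14 - α ^ 16 - α ^ 21 + α ^ 23 - α ^ 25) * h12
  · simp only [Matrix.mul_apply, Fin.sum_univ_two, Matrix.cons_val', Matrix.cons_val_zero,
      Matrix.cons_val_one, Matrix.head_cons, Matrix.head_fin_const, Matrix.empty_val',
      Matrix.cons_val_fin_one, Matrix.one_apply, Matrix.smul_apply, smul_eq_mul, Fin.zero_eta,
      Fin.mk_one, ne_eq, Fin.isValue, Matrix.of_apply, Matrix.cons_val_one, if_true, if_false,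
      one_ne_zero, zero_ne_one, mul_one, mul_zero, reduceCtorEq]
    linear_combination (-α ^ 11 + α ^ 13 + α ^ 14 + α ^ 17 - α ^ 22 - α ^ 23 - α ^ 26 - α ^ 27 + (-2:ℂ) * α ^ 28 + α ^ 30 + (2:ℂ) * α ^ 31 + (-2:ℂ) * α ^ 32 + (-2:ℂ) * α ^ 33 + α ^ 35 + (-2:ℂ) * α ^ 38 - α ^ 39 + (2:ℂ) * α ^ 41 + (2:ℂ) * α ^ 46 + α ^ 47 - α ^ 50 - α ^ 51 + α ^ 52 + (2:ℂ) * α ^ 53 + α ^ 56 + (2:ℂ) * α ^ 58 + α ^ 59 - α ^ 60 - α ^ 61 + α ^ 62 + α ^ 63 + α ^ 68) * h30 + (α - α ^ 3 - α ^ 4 - α ^ 7 + α ^ 12 + α ^ 13 + α ^ 16 + α ^ 17 + (2:ℂ) * α ^ 18 - α ^ 20 + (-2:ℂ) * α ^ 21 + (2:ℂ) * α ^ 22 + (2:ℂ) * α ^ 23 - α ^ 25 + (2:ℂ) * α ^ 28 + α ^ 29 + (-2:ℂ) * α ^ 31 + (-2:ℂ) * α ^ 36 - α ^ 37 + α ^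 40 + α ^ 41 - α ^ 42 + (-2:ℂ) * α ^ 43 - α ^ 46 + (-2:ℂ) * α ^ 48 - α ^ 49 + α ^ 50 + α ^ 51 - α ^ 52 - α ^ 53 - α ^ 58) * h20 + (α ^ 3 - α ^ 5 - α ^ 6 - α ^ 12 - α ^ 13 + α ^ 15 + α ^ 20 + α ^ 21 - α ^ 22 - α ^ 23 + α ^ 24 + α ^ 25 + α ^ 30) * h12

lemma m5 : !![α ^ 29 * (α ^ 11 - 1) + 1, α ^ 29 * (1 - α ^ 29); 1 - α ^ 11, α ^ 29] * !![α * α ^ 29, 0; α * (α ^ 11 - 1), 1] = !![(-α ^ 11), ((1:ℂ) + α - α ^ 4 - α ^ 5 - α ^ 6 - α ^ 7 - α ^ 8 - α ^ 9 + α ^ 12 + α ^ 13 + α ^ 14 + α ^ 15); (0:ℂ), (α - α ^ 5 - α ^ 7 - α ^ 9 + α ^ 13 + α ^ 15)] := by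
  ext i j
  fin_cases i <;> fin_cases j
  · simp only [Matrix.mul_apply, Fin.sum_univ_two, Matrix.cons_val', Matrix.cons_val_zero,
      Matrix.cons_val_one, Matrix.head_cons, Matrix.head_fin_const, Matrix.empty_val',
      Matrix.cons_val_fin_one, Matrix.one_apply, Matrix.smul_apply, smul_eq_mul, Fin.zero_eta,
      Fin.mk_one, ne_eq, Fin.isValue, Matrix.of_apply, Matrix.cons_val_one, if_true, if_false,
      one_ne_zero, zero_ne_one, mul_one, mul_zero, reduceCtorEq]
    linear_combination (-α ^ 21 + α ^ 23 - α ^ 25 + α ^ 27 - α ^ 31 + (2:ℂ) * α ^ 33 - α ^ 35 + α ^ 37 + α ^ 39 + α ^ 43 + α ^ 45 + α ^ 49 + α ^ 51 - α ^ 53 + (2:ℂ) * α ^ 55 + α ^ 61 - α ^ 63 + α ^ 65) * h30 + (α ^ 11 - α ^ 13 + α ^ 15 - α ^ 17 + α ^ 21 + (-2:ℂ) * α ^ 23 + α ^ 25 - α ^ 27 - α ^ 29 - α ^ 33 - α ^ 35 - α ^ 39 - α ^ 41 + α ^ 43 + (-2:ℂ) * α ^ 45 - α ^ 51 + α ^ 53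 - α ^ 55) * h20 + (α ^ 13 - α ^ 15 + α ^ 17 + α ^ 23 - α ^ 25 + α ^ 27) * h12
  · simp only [Matrix.mul_apply, Fin.sum_univ_two, Matrix.cons_val', Matrix.cons_val_zero,
      Matrix.cons_val_one, Matrix.head_cons, Matrix.head_fin_const, Matrix.empty_val',
      Matrix.cons_val_fin_one, Matrix.one_apply, Matrix.smul_apply, smul_eq_mul, Fin.zero_eta,
      Fin.mk_one, ne_eq, Fin.isValue, Matrix.of_apply, Matrix.cons_val_one, if_true, if_false,
      one_ne_zero, zero_ne_one, mul_one, mul_zero, reduceCtorEq]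
    linear_combination (α ^ 10 + α ^ 11 - α ^ 12 - α ^ 13 - α ^ 16 - α ^ 17 - α ^ 18 - α ^ 19 + (2:ℂ) * α ^ 20 + (2:ℂ) * α ^ 21 - α ^ 22 - α ^ 23 + α ^ 24 + α ^ 25 - α ^ 28 - α ^ 29 + α ^ 30 + α ^ 31 + α ^ 32 + α ^ 33 + α ^ 36 + α ^ 37 + α ^ 38 + (-2:ℂ) * α ^ 40 - α ^ 41 + (3:ℂ) * α ^ 42 + (2:ℂ) * α ^ 43 - α ^ 44 + (2:ℂ) * α ^ 48 + α ^ 49 + (-3:ℂ) * α ^ 50 - α ^ 51 + (2:ℂ) * α ^ 52 + α ^ 53 - α ^ 54 - α ^ 56 - α ^ 60 - α ^ 62 - α ^ 66 - α ^ 68 + α ^ 70 + (-2:ℂ) * α ^ 72 - α ^ 78 + α ^ 80 - α ^ 82) * h30 + ((-1:ℂ) - α + α ^ 2 + α ^ 3 + α ^ 6 + α ^ 7 + α ^ 8 + α ^ 9 + (-2:ℂ) * α ^ 10 + (-2:ℂ) * α ^ 11 + α ^ 12 + α ^ 13 - α ^ 14 - α ^ 15 + α ^ 18 + α ^ 19 -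 α ^ 20 - α ^ 21 - α ^ 22 - α ^ 23 - α ^ 26 - α ^ 27 - α ^ 28 + (2:ℂ) * α ^ 30 + α ^ 31 + (-3:ℂ) * α ^ 32 + (-2:ℂ) * α ^ 33 + α ^ 34 + (-2:ℂ) * α ^ 38 - α ^ 39 + (3:ℂ) * α ^ 40 + α ^ 41 + (-2:ℂ) * α ^ 42 - α ^ 43 + α ^ 44 + α ^ 46 + α ^ 50 + α ^ 52 + α ^ 56 + α ^ 58 - α ^ 60 + (2:ℂ) * α ^ 62 + α ^ 68 - α ^ 70 + α ^ 72) * h20 + (-α ^ 2 - α ^ 3 + α ^ 4 + α ^ 5 + α ^ 10 + α ^ 11 - α ^ 12 - α ^ 13 + α ^ 14 + α ^ 15 - α ^ 30 + α ^ 32 - α ^ 34 - α ^ 40 + α ^ 42 - α ^ 44) * h12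
  · simp only [Matrix.mul_apply, Fin.sum_univ_two, Matrix.cons_val', Matrix.cons_val_zero,
      Matrix.cons_val_one, Matrix.head_cons, Matrix.head_fin_const, Matrix.empty_val',
      Matrix.cons_val_fin_one, Matrix.one_apply, Matrix.smul_apply, smul_eq_mul, Fin.zero_eta,
      Fin.mk_one, ne_eq, Fin.isValue, Matrix.of_apply, Matrix.cons_val_one, if_true, if_false,
      one_ne_zero, zero_ne_one, mul_one, mul_zero, reduceCtorEq]
    linear_combination (0:ℂ) * h60
  · simp only [Matrix.mul_apply, Fin.sum_univ_two, Matrix.cons_val', Matrix.cons_val_zero,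
      Matrix.cons_val_one, Matrix.head_cons, Matrix.head_fin_const, Matrix.empty_val',
      Matrix.cons_val_fin_one, Matrix.one_apply, Matrix.smul_apply, smul_eq_mul, Fin.zero_eta,
      Fin.mk_one, ne_eq, Fin.isValue, Matrix.of_apply, Matrix.cons_val_one, if_true, if_false,
      one_ne_zero, zero_ne_one, mul_one, mul_zero, reduceCtorEq]
    linear_combination (α ^ 11 - α ^ 13 - α ^ 17 - α ^ 19 + (2:ℂ) * α ^ 21 - α ^ 23 + α ^ 25 - α ^ 29 + α ^ 31 + α ^ 33 + α ^ 37 - α ^ 41 + (2:ℂ) * α ^ 43 + α ^ 49 - α ^ 51 + α ^ 53) * h30 + (-α + α ^ 3 + α ^ 7 + α ^ 9 + (-2:ℂ) * α ^ 11 + α ^ 13 - α ^ 15 + α ^ 19 - α ^ 21 - α ^ 23 - α ^ 27 + α ^ 31 + (-2:ℂ) * α ^ 33 - α ^ 39 + α ^ 41 - α ^ 43) * h20 + (-α ^ 3 + α ^ 5 + α ^ 11 - α ^ 13 + α ^ 15) * h12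

lemma m6 : !![(-α ^ 11), ((1:ℂ) + α - α ^ 4 - α ^ 5 - α ^ 6 - α ^ 7 - α ^ 8 - α ^ 9 + α ^ 12 + α ^ 13 + α ^ 14 + α ^ 15); (0:ℂ), (α - α ^ 5 - α ^ 7 - α ^ 9 + α ^ 13 + α ^ 15)] * !![(-α ^ 11), ((1:ℂ) + α - α ^ 4 - α ^ 5 - α ^ 6 - α ^ 7 - α ^ 8 - α ^ 9 + α ^ 12 + α ^ 13 + α ^ 14 + α ^ 15); (0:ℂ), (α - α ^ 5 - α ^ 7 - α ^ 9 + α ^ 13 + α ^ 15)] = !![(-α ^ 2 + α ^ 12), ((-1:ℂ) + α + α ^ 3 + α ^ 4 + α ^ 6 + α ^ 8 + α ^ 10 - α ^ 11 - α ^ 12 - α ^ 14 + α ^ 15); (0:ℂ), ((-1:ℂ) + α ^ 4 + α ^ 6 + α ^ 8 - α ^ 12 - α ^ 14)] := by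
  ext i j
  fin_cases i <;> fin_cases j
  · simp only [Matrix.mul_apply, Fin.sum_univ_two, Matrix.cons_val', Matrix.cons_val_zero,
      Matrix.cons_val_one, Matrix.head_cons, Matrix.head_fin_const, Matrix.empty_val',
      Matrix.cons_val_fin_one, Matrix.one_apply, Matrix.smul_apply, smul_eq_mul, Fin.zero_eta,
      Fin.mk_one, ne_eq, Fin.isValue, Matrix.of_apply, Matrix.cons_val_one, if_true, if_false,
      one_ne_zero, zero_ne_one, mul_one, mul_zero, reduceCtorEq]
    linear_combination (-α ^ 12 + α ^ 14 - α ^ 16 + α ^ 18 + α ^ 24 + α ^ 30 + α ^ 36 + α ^ 42 - α ^ 44 + α ^ 46) * h30 + (α ^ 2 - α ^ 4 + α ^ 6 - α ^ 8 - α ^ 14 - α ^ 20 - α ^ 26 - α ^ 32 + α ^ 34 - α ^ 36) * h20 + (α ^ 4 - α ^ 6 + α ^ 8) * h12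
  · simp only [Matrix.mul_apply, Fin.sum_univ_two, Matrix.cons_val', Matrix.cons_val_zero,
      Matrix.cons_val_one, Matrix.head_cons, Matrix.head_fin_const, Matrix.empty_val',
      Matrix.cons_val_fin_one, Matrix.one_apply, Matrix.smul_apply, smul_eq_mul, Fin.zero_eta,
      Fin.mk_one, ne_eq, Fin.isValue, Matrix.of_apply, Matrix.cons_val_one, if_true, if_false,
      one_ne_zero, zero_ne_one, mul_one, mul_zero, reduceCtorEq]
    linear_combination (-α ^ 10 + α ^ 13 + α ^ 14 + α ^ 15 + (2:ℂ) * α ^ 16 + α ^ 17 + (2:ℂ) * α ^ 18 + (-3:ℂ) * α ^ 21 + (-3:ℂ) * α ^ 22 + (-3:ℂ) * α ^ 23 + (-3:ℂ) * α ^ 24 + (-2:ℂ) * α ^ 25 + (-2:ℂ) * α ^ 26 + α ^ 28 + (2:ℂ) * α ^ 29 + (3:ℂ) * α ^ 30 + (-2:ℂ) * α ^ 33 + (-2:ℂ) * α ^ 34 + (-2:ℂ) * α ^ 35 + (-2:ℂ) * α ^ 36 + (-2:ℂ) * α ^ 37 + (-2:ℂ) * α ^ 38 + α ^ 40 + (2:ℂ)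 * α ^ 41 + (2:ℂ) * α ^ 42 - α ^ 45 - α ^ 46 - α ^ 47 - α ^ 48 - α ^ 49 - α ^ 50 + α ^ 51 + α ^ 52 + α ^ 53 + α ^ 54) * h30 + ((1:ℂ) - α ^ 3 - α ^ 4 - α ^ 5 + (-2:ℂ) * α ^ 6 - α ^ 7 + (-2:ℂ) * α ^ 8 + (3:ℂ) * α ^ 11 + (3:ℂ) * α ^ 12 + (3:ℂ) * α ^ 13 + (3:ℂ) * α ^ 14 + (2:ℂ) * α ^ 15 + (2:ℂ) * α ^ 16 - α ^ 18 + (-2:ℂ) * α ^ 19 + (-3:ℂ) * α ^ 20 + (2:ℂ) * α ^ 23 + (2:ℂ) * α ^ 24 + (2:ℂ) * α ^ 25 + (2:ℂ) * α ^ 26 + (2:ℂ) * α ^ 27 + (2:ℂ) * α ^ 28 - α ^ 30 + (-2:ℂ) * α ^ 31 + (-2:ℂ) * α ^ 32 + α ^ 35 + α ^ 36 + α ^ 37 + α ^ 38 + α ^ 39 + α ^ 40 - α ^ 41 - α ^ 42 - α ^ 43 - α ^ 44) * h20 + (α ^ 2 - α ^ 5 - α ^ 6 - α ^ 7 - α ^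 8 - α ^ 9 - α ^ 10 - α ^ 11 - α ^ 12 + α ^ 13 + α ^ 14 + α ^ 15 + α ^ 16) * h12
  · simp only [Matrix.mul_apply, Fin.sum_univ_two, Matrix.cons_val', Matrix.cons_val_zero,
      Matrix.cons_val_one, Matrix.head_cons, Matrix.head_fin_const, Matrix.empty_val',
      Matrix.cons_val_fin_one, Matrix.one_apply, Matrix.smul_apply, smul_eq_mul, Fin.zero_eta,
      Fin.mk_one, ne_eq, Fin.isValue, Matrix.of_apply, Matrix.cons_val_one, if_true, if_false,
      one_ne_zero, zero_ne_one, mul_one, mul_zero, reduceCtorEq]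
    linear_combination (0:ℂ) * h60
  · simp only [Matrix.mul_apply, Fin.sum_univ_two, Matrix.cons_val', Matrix.cons_val_zero,
      Matrix.cons_val_one, Matrix.head_cons, Matrix.head_fin_const, Matrix.empty_val',
      Matrix.cons_val_fin_one, Matrix.one_apply, Matrix.smul_apply, smul_eq_mul, Fin.zero_eta,
      Fin.mk_one, ne_eq, Fin.isValue, Matrix.of_apply, Matrix.cons_val_one, if_true, if_false,
      one_ne_zero, zero_ne_one, mul_one, mul_zero, reduceCtorEq]
    linear_combination (-α ^ 10 + α ^ 14 + (2:ℂ) * α ^ 16 + (2:ℂ) * α ^ 18 - α ^ 20 + (-3:ℂ) * α ^ 22 + (-3:ℂ) * α ^ 24 - α ^ 26 + (2:ℂ) * α ^ 28 + (3:ℂ) * α ^ 30 + (-2:ℂ) * α ^ 34 + (-2:ℂ) * α ^ 36 - α ^ 38 + (2:ℂ) * α ^ 40 + (2:ℂ) * α ^ 42 - α ^ 46 - α ^ 48 + α ^ 52 + α ^ 54) * h30 + ((1:ℂ) - α ^ 4 + (-2:ℂ) * α ^ 6 + (-2:ℂ) * α ^ 8 + α ^ 10 + (3:ℂ) * α ^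 12 + (3:ℂ) * α ^ 14 + α ^ 16 + (-2:ℂ) * α ^ 18 + (-3:ℂ) * α ^ 20 + (2:ℂ) * α ^ 24 + (2:ℂ) * α ^ 26 + α ^ 28 + (-2:ℂ) * α ^ 30 + (-2:ℂ) * α ^ 32 + α ^ 36 + α ^ 38 - α ^ 42 - α ^ 44) * h20 + (α ^ 2 - α ^ 6 - α ^ 8 - α ^ 10 + α ^ 14 + α ^ 16) * h12

lemma m7 : !![(-α ^ 2 + α ^ 12), ((-1:ℂ) + α + α ^ 3 + α ^ 4 + α ^ 6 + α ^ 8 + α ^ 10 - α ^ 11 - α ^ 12 - α ^ 14 + α ^ 15); (0:ℂ), ((-1:ℂ) + α ^ 4 + α ^ 6 + α ^ 8 - α ^ 12 - α ^ 14)] * !![(-α ^ 11), ((1:ℂ) + α - α ^ 4 - α ^ 5 - α ^ 6 - α ^ 7 - α ^ 8 - α ^ 9 + α ^ 12 + α ^ 13 + α ^ 14 + α ^ 15); (0:ℂ), (α - α ^ 5 - α ^ 7 - α ^ 9 + α ^ 13 + α ^ 15)] = !![(α ^ 3), (-α ^ 2 - α ^ 3 - α ^ 14 - α ^ 15); (0:ℂ),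 (-α - α ^ 3 + α ^ 9 + α ^ 11 - α ^ 15)] := by
  ext i j
  fin_cases i <;> fin_cases j
  · simp only [Matrix.mul_apply, Fin.sum_univ_two, Matrix.cons_val', Matrix.cons_val_zero,
      Matrix.cons_val_one, Matrix.head_cons, Matrix.head_fin_const, Matrix.empty_val',
      Matrix.cons_val_fin_one, Matrix.one_apply, Matrix.smul_apply, smul_eq_mul, Fin.zero_eta,
      Fin.mk_one, ne_eq, Fin.isValue, Matrix.of_apply, Matrix.cons_val_one, if_true, if_false,
      one_ne_zero, zero_ne_one, mul_one, mul_zero, reduceCtorEq]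
    linear_combination (α ^ 13 - α ^ 15 + α ^ 17 - α ^ 19 - α ^ 25 - α ^ 31 - α ^ 37 - α ^ 43 + α ^ 45 - α ^ 47) * h30 + (-α ^ 3 + α ^ 5 - α ^ 7 + α ^ 9 + α ^ 15 + α ^ 21 + α ^ 27 + α ^ 33 - α ^ 35 + α ^ 37) * h20 + (-α ^ 5 + α ^ 7 - α ^ 9) * h12
  · simp only [Matrix.mul_apply, Fin.sum_univ_two, Matrix.cons_val', Matrix.cons_val_zero,
      Matrix.cons_val_one, Matrix.head_cons, Matrix.head_fin_const, Matrix.empty_val',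
      Matrix.cons_val_fin_one, Matrix.one_apply, Matrix.smul_apply, smul_eq_mul, Fin.zero_eta,
      Fin.mk_one, ne_eq, Fin.isValue, Matrix.of_apply, Matrix.cons_val_one, if_true, if_false,
      one_ne_zero, zero_ne_one, mul_one, mul_zero, reduceCtorEq]
    linear_combination (α ^ 11 - α ^ 12 - α ^ 13 - α ^ 15 + (-2:ℂ) * α ^ 17 + α ^ 18 - α ^ 19 + α ^ 20 + (2:ℂ) * α ^ 21 + (3:ℂ) * α ^ 23 - α ^ 24 + (2:ℂ) * α ^ 25 + α ^ 27 + (-2:ℂ) * α ^ 29 + (2:ℂ) * α ^ 30 - α ^ 31 + (2:ℂ) * α ^ 32 + (2:ℂ) * α ^ 33 + (2:ℂ) * α ^ 35 + (2:ℂ) * α ^ 37 + α ^ 39 + (-2:ℂ) * α ^ 41 + (2:ℂ) * α ^ 42 + α ^ 44 + α ^ 45 + α ^ 47 + α ^ 49 - α ^ 53 + α ^ 54) * h30 + (-α + α ^ 2 + α ^ 3 + α ^ 5 + (2:ℂ) * α ^ 7 - α ^ 8 + α ^ 9 - α ^ 10 + (-2:ℂ) * α ^ 11 + (-3:ℂ)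 * α ^ 13 + α ^ 14 + (-2:ℂ) * α ^ 15 - α ^ 17 + (2:ℂ) * α ^ 19 + (-2:ℂ) * α ^ 20 + α ^ 21 + (-2:ℂ) * α ^ 22 + (-2:ℂ) * α ^ 23 + (-2:ℂ) * α ^ 25 + (-2:ℂ) * α ^ 27 - α ^ 29 + (2:ℂ) * α ^ 31 + (-2:ℂ) * α ^ 32 - α ^ 34 - α ^ 35 - α ^ 37 - α ^ 39 + α ^ 43 - α ^ 44) * h20 + (-α ^ 3 + α ^ 4 + α ^ 5 + α ^ 7 + α ^ 9 + α ^ 11 - α ^ 15 + α ^ 16) * h12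
  · simp only [Matrix.mul_apply, Fin.sum_univ_two, Matrix.cons_val', Matrix.cons_val_zero,
      Matrix.cons_val_one, Matrix.head_cons, Matrix.head_fin_const, Matrix.empty_val',
      Matrix.cons_val_fin_one, Matrix.one_apply, Matrix.smul_apply, smul_eq_mul, Fin.zero_eta,
      Fin.mk_one, ne_eq, Fin.isValue, Matrix.of_apply, Matrix.cons_val_one, if_true, if_false,
      one_ne_zero, zero_ne_one, mul_one, mul_zero, reduceCtorEq]
    linear_combination (0:ℂ) * h60
  · simp only [Matrix.mul_apply, Fin.sum_univ_two, Matrix.cons_val', Matrix.cons_val_zero,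
      Matrix.cons_val_one, Matrix.head_cons, Matrix.head_fin_const, Matrix.empty_val',
      Matrix.cons_val_fin_one, Matrix.one_apply, Matrix.smul_apply, smul_eq_mul, Fin.zero_eta,
      Fin.mk_one, ne_eq, Fin.isValue, Matrix.of_apply, Matrix.cons_val_one, if_true, if_false,
      one_ne_zero, zero_ne_one, mul_one, mul_zero, reduceCtorEq]
    linear_combination (-α ^ 13 - α ^ 15 - α ^ 17 + α ^ 19 + (3:ℂ) * α ^ 21 + (3:ℂ) * α ^ 23 + α ^ 25 - α ^ 27 + (-2:ℂ) * α ^ 29 + (2:ℂ) * α ^ 33 + (2:ℂ) * α ^ 35 + α ^ 37 - α ^ 39 + (-2:ℂ) * α ^ 41 + α ^ 45 + α ^ 47 - α ^ 51 - α ^ 53) * h30 + (α ^ 3 + α ^ 5 + α ^ 7 - α ^ 9 + (-3:ℂ) * α ^ 11 + (-3:ℂ) * α ^ 13 - α ^ 15 + α ^ 17 + (2:ℂ) * α ^ 19 + (-2:ℂ) * α ^ 23 + (-2:ℂ) * α ^ 25 - α ^ 27 + α ^ 29 + (2:ℂ) * α ^ 31 - α ^ 35 - α ^ 37 + α ^ 41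 + α ^ 43) * h20 + (α ^ 5 + α ^ 7 + α ^ 9 - α ^ 13 - α ^ 15) * h12

lemma m8 : !![(α ^ 3), (-α ^ 2 - α ^ 3 - α ^ 14 - α ^ 15); (0:ℂ), (-α - α ^ 3 + α ^ 9 + α ^ 11 - α ^ 15)] * !![(-α ^ 11), ((1:ℂ) + α - α ^ 4 - α ^ 5 - α ^ 6 - α ^ 7 - α ^ 8 - α ^ 9 + α ^ 12 + α ^ 13 + α ^ 14 + α ^ 15); (0:ℂ), (α - α ^ 5 - α ^ 7 - α ^ 9 + α ^ 13 + α ^ 15)] = !![(-α ^ 14), (α ^ 13 + α ^ 14); (0:ℂ), ((1:ℂ) + α ^ 2 - α ^ 8 - α ^ 10 + α ^ 14)] := by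
  ext i j
  fin_cases i <;> fin_cases j
  · simp only [Matrix.mul_apply, Fin.sum_univ_two, Matrix.cons_val', Matrix.cons_val_zero,
      Matrix.cons_val_one, Matrix.head_cons, Matrix.head_fin_const, Matrix.empty_val',
      Matrix.cons_val_fin_one, Matrix.one_apply, Matrix.smul_apply, smul_eq_mul, Fin.zero_eta,
      Fin.mk_one, ne_eq, Fin.isValue, Matrix.of_apply, Matrix.cons_val_one, if_true, if_false,
      one_ne_zero, zero_ne_one, mul_one, mul_zero, reduceCtorEq]
    linear_combination (0:ℂ) * h60
  · simp only [Matrix.mul_apply, Fin.sum_univ_two, Matrix.cons_val', Matrix.cons_val_zero,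
      Matrix.cons_val_one, Matrix.head_cons, Matrix.head_fin_const, Matrix.empty_val',
      Matrix.cons_val_fin_one, Matrix.one_apply, Matrix.smul_apply, smul_eq_mul, Fin.zero_eta,
      Fin.mk_one, ne_eq, Fin.isValue, Matrix.of_apply, Matrix.cons_val_one, if_true, if_false,
      one_ne_zero, zero_ne_one, mul_one, mul_zero, reduceCtorEq]
    linear_combination (α ^ 23 + α ^ 24 - α ^ 29 - α ^ 30 - α ^ 31 - α ^ 32 - α ^ 41 - α ^ 42 - α ^ 43 - α ^ 44 - α ^ 53 - α ^ 54) * h30 + (-α ^ 13 - α ^ 14 + α ^ 19 + α ^ 20 + α ^ 21 + α ^ 22 + α ^ 31 + α ^ 32 + α ^ 33 + α ^ 34 + α ^ 43 + α ^ 44) * h20 + (-α ^ 15 - α ^ 16) * h12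
  · simp only [Matrix.mul_apply, Fin.sum_univ_two, Matrix.cons_val', Matrix.cons_val_zero,
      Matrix.cons_val_one, Matrix.head_cons, Matrix.head_fin_const, Matrix.empty_val',
      Matrix.cons_val_fin_one, Matrix.one_apply, Matrix.smul_apply, smul_eq_mul, Fin.zero_eta,
      Fin.mk_one, ne_eq, Fin.isValue, Matrix.of_apply, Matrix.cons_val_one, if_true, if_false,
      one_ne_zero, zero_ne_one, mul_one, mul_zero, reduceCtorEq]
    linear_combination (0:ℂ) * h60
  · simp only [Matrix.mul_apply, Fin.sum_univ_two, Matrix.cons_val', Matrix.cons_val_zero,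
      Matrix.cons_val_one, Matrix.head_cons, Matrix.head_fin_const, Matrix.empty_val',
      Matrix.cons_val_fin_one, Matrix.one_apply, Matrix.smul_apply, smul_eq_mul, Fin.zero_eta,
      Fin.mk_one, ne_eq, Fin.isValue, Matrix.of_apply, Matrix.cons_val_one, if_true, if_false,
      one_ne_zero, zero_ne_one, mul_one, mul_zero, reduceCtorEq]
    linear_combination (α ^ 10 + α ^ 12 - α ^ 16 + (-3:ℂ) * α ^ 18 + (-2:ℂ) * α ^ 20 + (2:ℂ) * α ^ 24 + (2:ℂ) * α ^ 26 + (-3:ℂ) * α ^ 30 + (-2:ℂ) * α ^ 32 + α ^ 36 + (2:ℂ) * α ^ 38 + (-2:ℂ) * α ^ 42 - α ^ 44 + α ^ 48 + α ^ 50 - α ^ 54) * h30 + ((-1:ℂ) - α ^ 2 + α ^ 6 + (3:ℂ) * α ^ 8 + (2:ℂ) * α ^ 10 + (-2:ℂ) * α ^ 14 + (-2:ℂ) * α ^ 16 + (3:ℂ) * α ^ 20 + (2:ℂ) * α ^ 22 - α ^ 26 + (-2:ℂ) * α ^ 28 + (2:ℂ) * α ^ 32 + α ^ 34 - α ^ 38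 - α ^ 40 + α ^ 44) * h20 + (-α ^ 2 - α ^ 4 + α ^ 10 + α ^ 12 - α ^ 16) * h12

lemma m9 : !![(-α ^ 14), (α ^ 13 + α ^ 14); (0:ℂ), ((1:ℂ) + α ^ 2 - α ^ 8 - α ^ 10 + α ^ 14)] * !![(-α ^ 11), ((1:ℂ) + α - α ^ 4 - α ^ 5 - α ^ 6 - α ^ 7 - α ^ 8 - α ^ 9 + α ^ 12 + α ^ 13 + α ^ 14 + α ^ 15); (0:ℂ), (α - α ^ 5 - α ^ 7 - α ^ 9 + α ^ 13 + α ^ 15)] = (α ^ 25) • (1 : Matrix (Fin 2) (Fin 2) ℂ) := by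
  ext i j
  fin_cases i <;> fin_cases j
  · simp only [Matrix.mul_apply, Fin.sum_univ_two, Matrix.cons_val', Matrix.cons_val_zero,
      Matrix.cons_val_one, Matrix.head_cons, Matrix.head_fin_const, Matrix.empty_val',
      Matrix.cons_val_fin_one, Matrix.one_apply, Matrix.smul_apply, smul_eq_mul, Fin.zero_eta,
      Fin.mk_one, ne_eq, Fin.isValue, Matrix.of_apply, Matrix.cons_val_one, if_true, if_false,
      one_ne_zero, zero_ne_one, mul_one, mul_zero, reduceCtorEq]
    linear_combination (0:ℂ) * h60
  · simp only [Matrix.mul_apply, Fin.sum_univ_two, Matrix.cons_val', Matrix.cons_val_zero,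
      Matrix.cons_val_one, Matrix.head_cons, Matrix.head_fin_const, Matrix.empty_val',
      Matrix.cons_val_fin_one, Matrix.one_apply, Matrix.smul_apply, smul_eq_mul, Fin.zero_eta,
      Fin.mk_one, ne_eq, Fin.isValue, Matrix.of_apply, Matrix.cons_val_one, if_true, if_false,
      one_ne_zero, zero_ne_one, mul_one, mul_zero, reduceCtorEq]
    linear_combination (0:ℂ) * h60
  · simp only [Matrix.mul_apply, Fin.sum_univ_two, Matrix.cons_val', Matrix.cons_val_zero,
      Matrix.cons_val_one, Matrix.head_cons, Matrix.head_fin_const, Matrix.empty_val',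
      Matrix.cons_val_fin_one, Matrix.one_apply, Matrix.smul_apply, smul_eq_mul, Fin.zero_eta,
      Fin.mk_one, ne_eq, Fin.isValue, Matrix.of_apply, Matrix.cons_val_one, if_true, if_false,
      one_ne_zero, zero_ne_one, mul_one, mul_zero, reduceCtorEq]
    linear_combination (0:ℂ) * h60
  · simp only [Matrix.mul_apply, Fin.sum_univ_two, Matrix.cons_val', Matrix.cons_val_zero,
      Matrix.cons_val_one, Matrix.head_cons, Matrix.head_fin_const, Matrix.empty_val',
      Matrix.cons_val_fin_one, Matrix.one_apply, Matrix.smul_apply, smul_eq_mul, Fin.zero_eta,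
      Fin.mk_one, ne_eq, Fin.isValue, Matrix.of_apply, Matrix.cons_val_one, if_true, if_false,
      one_ne_zero, zero_ne_one, mul_one, mul_zero, reduceCtorEq]
    linear_combination (-α ^ 11 + α ^ 15 + α ^ 17 + (3:ℂ) * α ^ 19 - α ^ 21 + (-2:ℂ) * α ^ 23 + (-2:ℂ) * α ^ 25 + (-2:ℂ) * α ^ 27 + (2:ℂ) * α ^ 29 + (2:ℂ) * α ^ 31 - α ^ 33 - α ^ 35 + (-2:ℂ) * α ^ 37 + (-2:ℂ) * α ^ 39 + (2:ℂ) * α ^ 41 + α ^ 43 - α ^ 45 + (-2:ℂ) * α ^ 49 + α ^ 53) * h30 + (α - α ^ 5 - α ^ 7 + (-3:ℂ) * α ^ 9 + α ^ 11 + (2:ℂ) * α ^ 13 + (2:ℂ) * α ^ 15 + (2:ℂ) * α ^ 17 + (-2:ℂ) * α ^ 19 + (-2:ℂ) * α ^ 21 + α ^ 23 + α ^ 25 + (2:ℂ) * α ^ 27 + (2:ℂ) * α ^ 29 + (-2:ℂ) * α ^ 31 - α ^ 33 + α ^ 35 + (2:ℂ) * α ^ 39 - α ^ 43) * h20 + (α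 ^ 3 - α ^ 7 + (-2:ℂ) * α ^ 11 + α ^ 15) * h12

end MatrixLemmas

/-! ### Generators of the alternating group A₅ -/

instance fact_prime_five : Fact (Nat.Prime 5) := ⟨by norm_num⟩

def sa : alternatingGroup (Fin 5) :=
  ⟨Equiv.swap 0 3 * Equiv.swap 1 4, Equiv.Perm.mem_alternatingGroup.2 (by decide)⟩
def ta : alternatingGroup (Fin 5) :=
  ⟨Equiv.swap 0 1 * Equiv.swap 1 2, Equiv.Perm.mem_alternatingGroup.2 (by decide)⟩

lemma sa_sq : sa * sa = 1 := by decide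
lemma ta_cube : ta ^ 3 = 1 := by decide
lemma tasa_pow : (ta * sa) ^ 5 = 1 := by decide

lemma cardA5 : Nat.card (alternatingGroup (Fin 5)) = 60 := by
  have h := two_mul_card_alternatingGroup (α := Fin 5)
  have hf : (5 : ℕ).factorial = 120 := by norm_num [Nat.factorial]
  rw [Fintype.card_perm, Fintype.card_fin, hf] at h
  rw [Nat.card_eq_fintype_card]
  omega

lemma closure_sa_ta : Subgroup.closure ({sa, ta} : Set (alternatingGroup (Fin 5))) = ⊤ := by
  set H := Subgroup.closure ({sa, ta} : Set (alternatingGroup (Fin 5))) with hH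
  have hsa : sa ∈ H := Subgroup.subset_closure (Set.mem_insert _ _)
  have hta : ta ∈ H := Subgroup.subset_closure (Set.mem_insert_of_mem _ rfl)
  have h2 : (2 : ℕ) ∣ Nat.card H := by
    have : orderOf sa = 2 := orderOf_eq_prime (by decide) (by decide)
    simpa [this] using H.orderOf_dvd_natCard hsa
  have h3 : (3 : ℕ) ∣ Nat.card H := by
    have : orderOf ta = 3 := orderOf_eq_prime ta_cube (by decide)
    simpa [this] using H.orderOf_dvd_natCard hta
  have h5 : (5 : ℕ) ∣ Nat.card H := by
    have : orderOf (ta * sa) = 5 := orderOf_eq_prime tasa_pow (by decide)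
    simpa [this] using H.orderOf_dvd_natCard (H.mul_mem hta hsa)
  have h30 : (30 : ℕ) ∣ Nat.card H := by
    have h6 : (6 : ℕ) ∣ Nat.card H :=
      (Nat.coprime_iff_gcd_eq_one.2 (by norm_num)).mul_dvd_of_dvd_of_dvd h2 h3
    exact (Nat.coprime_iff_gcd_eq_one.2 (by norm_num) :
      Nat.Coprime 6 5).mul_dvd_of_dvd_of_dvd h6 h5
  have hdvd : Nat.card H ∣ 60 := cardA5 ▸ H.card_subgroup_dvd_card
  obtain ⟨m, hm⟩ := h30
  have hm0 : m ≠ 0 := by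
    rintro rfl
    rw [Nat.mul_zero] at hm
    exact (Nat.card_pos (α := H)).ne' hm
  have hmle : m ≤ 2 := by
    have h1 : (30 * m) ∣ 60 := hm ▸ hdvd
    have := Nat.le_of_dvd (by norm_num) h1
    omega
  have hm1 : 1 ≤ m := Nat.one_le_iff_ne_zero.2 hm0
  interval_cases m
  · -- card H = 30 : impossible, H would have index 2 and be normal in the simple A₅
    exfalso
    have hcard : Nat.card H = 30 := by omega
    have hidx : H.index = 2 := by
      have := Subgroup.card_mul_index H
      rw [hcard, cardA5] at this
      omega
    have hnormal : H.Normal := by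
      constructor
      intro h hh gg
      have e1 := Subgroup.mul_mem_iff_of_index_two hidx (a := gg * h) (b := gg⁻¹)
      have e2 := Subgroup.mul_mem_iff_of_index_two hidx (a := gg) (b := h)
      rw [e1, e2, Subgroup.inv_mem_iff]
      simp [hh]
    rcases (alternatingGroup.isSimpleGroup_five.eq_bot_or_eq_top_of_normal H hnormal) with h | h
    · rw [h, Subgroup.card_bot] at hcard; norm_num at hcard
    · rw [h, Subgroup.card_top, cardA5] at hcard; norm_num at hcard
  · exact H.eq_top_of_card_eq (by rw [hm, cardA5])

/-! ### The homomorphism onto A₅ and the equivalence -/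

def f5 : Fin 2 → alternatingGroup (Fin 5) := ![sa, ta]

lemma hrel5 : ∀ r ∈ icoRels, FreeGroup.lift f5 r = 1 := by
  intro r hr
  simp only [icoRels, Set.mem_insert_iff, Set.mem_singleton_iff] at hr
  rcases hr with rfl | rfl | rfl
  · simp only [map_mul, FreeGroup.lift_apply_of]
    exact sa_sq
  · simp only [map_pow, FreeGroup.lift_apply_of]
    exact ta_cube
  · simp only [map_pow, map_mul, FreeGroup.lift_apply_of]
    exact tasa_pow

def ghom : P →* alternatingGroup (Fin 5) := PresentedGroup.toGroup hrel5

lemma ghom_X : ghom X = sa := PresentedGroup.toGroup.of hrel5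
lemma ghom_Y : ghom Y = ta := PresentedGroup.toGroup.of hrel5

lemma ghom_surj : Function.Surjective ghom := by
  rw [← MonoidHom.range_eq_top, MonoidHom.range_eq_map,
    ← PresentedGroup.closure_range_of icoRels, MonoidHom.map_closure, range_of_eq,
    Set.image_pair, ghom_X, ghom_Y, closure_sa_ta]

lemma cardP : Nat.card P = 60 := by
  refine le_antisymm cardP_le ?_
  have h := Nat.card_le_card_of_surjective ghom ghom_surj
  rwa [cardA5] at h

def geq : P ≃* alternatingGroup (Fin 5) :=
  MulEquiv.ofBijective ghom
    ((Nat.bijective_iff_surjective_and_card ghom).2 ⟨ghom_surj, by rw [cardP, cardA5]⟩)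

lemma geq_apply (p : P) : geq p = ghom p := rfl

/-! ### The main theorem -/

/-- The icosahedral case of Table 3 of the paper: for `α` a primitive 60th root of
unity and `(λ₁,λ₂,λ₃,λ₄) = (α,α²⁹,α¹¹,α¹⁹)`, the group of transformations of
`ℙ(ℂ²)` induced by the subgroup of `GL₂(ℂ)` generated by
`Â₃ = [[λ₁λ₂,0],[λ₁(λ₃−1),1]]` and `Â₁ = [[λ₂(λ₃−1)+1, λ₂(1−λ₂)],[1−λ₃, λ₂]]`
(i.e. its image in `GL₂(ℂ)` modulo the scalars, which form the center) is finite of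
cardinality 60, isomorphic to the alternating group `A₅`. -/
theorem icosahedral_orbit_group (α : ℂ) (hα : orderOf α = 60)
    (l₁ l₂ l₃ l₄ : ℂ)
    (h₁ : l₁ = α) (h₂ : l₂ = α ^ 29) (h₃ : l₃ = α ^ 11) (h₄ : l₄ = α ^ 19)
    (Ahat₃ Ahat₁ : Matrix (Fin 2) (Fin 2) ℂ)
    (hA₃ : Ahat₃ = !![l₁ * l₂, 0; l₁ * (l₃ - 1), 1])
    (hA₁ : Ahat₁ = !![l₂ * (l₃ - 1) + 1, l₂ * (1 - l₂); 1 - l₃, l₂]) :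
    ∃ a₁ a₃ : (Matrix (Fin 2) (Fin 2) ℂ)ˣ,
      (a₁ : Matrix (Fin 2) (Fin 2) ℂ) = Ahat₁ ∧
      (a₃ : Matrix (Fin 2) (Fin 2) ℂ) = Ahat₃ ∧
      ∀ Γ : Subgroup ((Matrix (Fin 2) (Fin 2) ℂ)ˣ ⧸
          Subgroup.center (Matrix (Fin 2) (Fin 2) ℂ)ˣ),
        Γ = Subgroup.map
              (QuotientGroup.mk' (Subgroup.center (Matrix (Fin 2) (Fin 2) ℂ)ˣ))
              (Subgroup.closure {a₁, a₃}) →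
        Finite Γ ∧ Nat.card Γ = 60 ∧ Nonempty (Γ ≃* alternatingGroup (Fin 5)) := by
  rw [h₁, h₂, h₃] at hA₃
  rw [h₂, h₃] at hA₁
  clear h₁ h₂ h₃ h₄
  -- basic facts about α
  have h60' : α ^ 60 = 1 := by rw [← hα]; exact pow_orderOf_eq_one α
  have h60 : α ^ 60 - 1 = 0 := by rw [h60']; ring
  have hpow_ne : ∀ m : ℕ, 0 < m → m < 60 → α ^ m ≠ 1 := by
    intro m hm0 hm60 hcontra
    have hd := orderOf_dvd_iff_pow_eq_one.2 hcontra
    rw [hα] at hd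
    exact absurd (Nat.le_of_dvd hm0 hd) (by omega)
  have h30 : α ^ 30 + 1 = 0 := by
    have hf : (α ^ 30 - 1) * (α ^ 30 + 1) = 0 := by linear_combination h60
    rcases mul_eq_zero.1 hf with h | h
    · exact absurd (by linear_combination h : α ^ 30 = 1)
        (hpow_ne 30 (by norm_num) (by norm_num))
    · exact h
  have h20 : α ^ 40 + α ^ 20 + 1 = 0 := by
    have hf : (α ^ 20 - 1) * (α ^ 40 + α ^ 20 + 1) = 0 := by linear_combination h60
    rcases mul_eq_zero.1 hf with h | h
    · exact absurd (by linear_combination h : α ^ 20 = 1)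
        (hpow_ne 20 (by norm_num) (by norm_num))
    · exact h
  have h12 : α ^ 48 + α ^ 36 + α ^ 24 + α ^ 12 + 1 = 0 := by
    have hf : (α ^ 12 - 1) * (α ^ 48 + α ^ 36 + α ^ 24 + α ^ 12 + 1) = 0 := by
      linear_combination h60
    rcases mul_eq_zero.1 hf with h | h
    · exact absurd (by linear_combination h : α ^ 12 = 1)
        (hpow_ne 12 (by norm_num) (by norm_num))
    · exact h
  -- the units
  have e1 : Ahat₃ * Ahat₃ = 1 := by rw [hA₃]; exact m1 h60 h30 h20 h12
  have e2 : Ahat₁ * !![(-α + α ^ 5 + α ^ 7 - α ^ 13 - α ^ 15), ((1:ℂ) + α - α ^ 4 - α ^ 5 - α ^ 6 - α ^ 7 + α ^ 12 + α ^ 13 + α ^ 14 + α ^ 15); ((1:ℂ) - α - α ^ 10), (α - α ^ 5 - α ^ 7 + α ^ 10 + α ^ 13 + α ^ 15)] = 1 := by rw [hA₁]; exact m4 h60 h30 h20 h12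
  have e3 : !![(-α + α ^ 5 + α ^ 7 - α ^ 13 - α ^ 15), ((1:ℂ) + α - α ^ 4 - α ^ 5 - α ^ 6 - α ^ 7 + α ^ 12 + α ^ 13 + α ^ 14 + α ^ 15); ((1:ℂ) - α - α ^ 10), (α - α ^ 5 - α ^ 7 + α ^ 10 + α ^ 13 + α ^ 15)] * Ahat₁ = 1 := by rw [hA₁]; exact m3 h60 h30 h20 h12
  refine ⟨⟨Ahat₁, !![(-α + α ^ 5 + α ^ 7 - α ^ 13 - α ^ 15), ((1:ℂ) + α - α ^ 4 - α ^ 5 - α ^ 6 - α ^ 7 + α ^ 12 + α ^ 13 + α ^ 14 + α ^ 15); ((1:ℂ) - α - α ^ 10), (α - α ^ 5 - α ^ 7 + α ^ 10 + α ^ 13 + α ^ 15)], e2, e3⟩, ⟨Ahat₃, Ahat₃, e1, e1⟩, rfl, rfl, ?_⟩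
  intro Γ hΓ
  set C := Subgroup.center (Matrix (Fin 2) (Fin 2) ℂ)ˣ with hC
  set a1 : (Matrix (Fin 2) (Fin 2) ℂ)ˣ := ⟨Ahat₁, !![(-α + α ^ 5 + α ^ 7 - α ^ 13 - α ^ 15), ((1:ℂ) + α - α ^ 4 - α ^ 5 - α ^ 6 - α ^ 7 + α ^ 12 + α ^ 13 + α ^ 14 + α ^ 15); ((1:ℂ) - α - α ^ 10), (α - α ^ 5 - α ^ 7 + α ^ 10 + α ^ 13 + α ^ 15)], e2, e3⟩ with ha1
  set a3 : (Matrix (Fin 2) (Fin 2) ℂ)ˣ := ⟨Ahat₃, Ahat₃, e1, e1⟩ with ha3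
  -- relations among the units
  have ha3sq : a3 * a3 = 1 := by
    apply Units.ext
    rw [Units.val_mul, Units.val_one]
    exact e1
  have ha1cube : a1 ^ 3 = 1 := by
    apply Units.ext
    rw [pow_succ, pow_succ, pow_one, Units.val_mul, Units.val_mul, Units.val_one]
    show Ahat₁ * Ahat₁ * Ahat₁ = 1
    rw [hA₁, m2 h60 h30 h20 h12]
    exact m3 h60 h30 h20 h12
  have hpow5 : (((a1 * a3) ^ 5 : (Matrix (Fin 2) (Fin 2) ℂ)ˣ) : Matrix (Fin 2) (Fin 2) ℂ)
      = α ^ 25 • (1 : Matrix (Fin 2) (Fin 2) ℂ) := by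
    rw [Units.val_pow_eq_pow_val, Units.val_mul]
    show (Ahat₁ * Ahat₃) ^ 5 = _
    rw [hA₁, hA₃, pow_succ, pow_succ, pow_succ, pow_succ, pow_one,
      m5 h60 h30 h20 h12, m6 h60 h30 h20 h12, m7 h60 h30 h20 h12,
      m8 h60 h30 h20 h12, m9 h60 h30 h20 h12]
  have hcenter : (a1 * a3) ^ 5 ∈ C := by
    rw [hC, Subgroup.mem_center_iff]
    intro gg
    apply Units.ext
    rw [Units.val_mul, Units.val_mul, hpow5, Matrix.mul_smul, Matrix.smul_mul,
      mul_one, one_mul]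
  -- the presented-group homomorphism into the quotient
  set fQ : Fin 2 → ((Matrix (Fin 2) (Fin 2) ℂ)ˣ ⧸ C) :=
    ![QuotientGroup.mk' C a3, QuotientGroup.mk' C a1] with hfQ
  have hrelQ : ∀ r ∈ icoRels, FreeGroup.lift fQ r = 1 := by
    intro r hr
    simp only [icoRels, Set.mem_insert_iff, Set.mem_singleton_iff] at hr
    rcases hr with rfl | rfl | rfl
    · simp only [map_mul, FreeGroup.lift_apply_of]
      show QuotientGroup.mk' C a3 * QuotientGroup.mk' C a3 = 1
      rw [← map_mul, ha3sq, map_one]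
    · simp only [map_pow, FreeGroup.lift_apply_of]
      show (QuotientGroup.mk' C a1) ^ 3 = 1
      rw [← map_pow, ha1cube, map_one]
    · simp only [map_pow, map_mul, FreeGroup.lift_apply_of]
      show (QuotientGroup.mk' C a1 * QuotientGroup.mk' C a3) ^ 5 = 1
      rw [← map_mul, ← map_pow, QuotientGroup.mk'_apply]
      exact (QuotientGroup.eq_one_iff _).2 hcenter
  set fhom : P →* ((Matrix (Fin 2) (Fin 2) ℂ)ˣ ⧸ C) := PresentedGroup.toGroup hrelQ with hfhom
  have fhom_X : fhom X = QuotientGroup.mk' C a3 := PresentedGroup.toGroup.of hrelQ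
  have fhom_Y : fhom Y = QuotientGroup.mk' C a1 := PresentedGroup.toGroup.of hrelQ
  set φ : alternatingGroup (Fin 5) →* ((Matrix (Fin 2) (Fin 2) ℂ)ˣ ⧸ C) :=
    fhom.comp geq.symm.toMonoidHom with hφ
  -- φ is nontrivial
  have hXne : QuotientGroup.mk' C a3 ≠ 1 := by
    intro hcon
    have hmem : a3 ∈ C := by
      rw [← QuotientGroup.ker_mk' C]
      exact hcon
    have hE1 : (!![1, 1; 0, 1] : Matrix (Fin 2) (Fin 2) ℂ) * !![1, -1; 0, 1] = 1 := by
      ext i j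
      fin_cases i <;> fin_cases j <;>
        simp [Matrix.mul_apply, Fin.sum_univ_two, Matrix.one_apply]
    have hE2 : (!![1, -1; 0, 1] : Matrix (Fin 2) (Fin 2) ℂ) * !![1, 1; 0, 1] = 1 := by
      ext i j
      fin_cases i <;> fin_cases j <;>
        simp [Matrix.mul_apply, Fin.sum_univ_two, Matrix.one_apply]
    set Eu : (Matrix (Fin 2) (Fin 2) ℂ)ˣ :=
      ⟨!![1, 1; 0, 1], !![1, -1; 0, 1], hE1, hE2⟩ with hEu
    have hcomm := (Subgroup.mem_center_iff.1 (hC ▸ hmem)) Eu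
    have hval : (!![1, 1; 0, 1] : Matrix (Fin 2) (Fin 2) ℂ) * Ahat₃ = Ahat₃ * !![1, 1; 0, 1] :=
      congrArg Units.val hcomm
    rw [hA₃] at hval
    have h01 := congrFun (congrFun hval 0) 1
    simp [Matrix.mul_apply, Fin.sum_univ_two] at h01
    exact hpow_ne 30 (by norm_num) (by norm_num) (by linear_combination (-1 : ℂ) * h01)
  have hφne : φ (geq X) ≠ 1 := by
    have : φ (geq X) = fhom X := by
      rw [hφ, MonoidHom.comp_apply]
      congr 1
      exact geq.symm_apply_apply X
    rw [this, fhom_X]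
    exact hXne
  -- φ is injective, since A₅ is simple
  have hinj : Function.Injective φ := by
    rw [← MonoidHom.ker_eq_bot_iff]
    rcases alternatingGroup.isSimpleGroup_five.eq_bot_or_eq_top_of_normal φ.ker
      inferInstance with h | h
    · exact h
    · exfalso
      apply hφne
      have : geq X ∈ φ.ker := by rw [h]; trivial
      exact this
  -- the range of φ is Γ
  have hrange : φ.range = Γ := by
    rw [hΓ, hφ, MonoidHom.range_comp]
    have htop : (geq.symm.toMonoidHom : alternatingGroup (Fin 5) →* P).range = ⊤ :=
      MonoidHom.range_eq_top.2 geq.symm.surjective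
    rw [htop, ← MonoidHom.range_eq_map, MonoidHom.range_eq_map,
      ← PresentedGroup.closure_range_of icoRels, MonoidHom.map_closure, range_of_eq,
      Set.image_pair, fhom_X, fhom_Y, MonoidHom.map_closure, Set.image_pair,
      Set.pair_comm]
  have e : Γ ≃* alternatingGroup (Fin 5) :=
    ((MulEquiv.subgroupCongr hrange.symm).trans (MonoidHom.ofInjective hinj).symm)
  refine ⟨Finite.of_equiv _ e.symm.toEquiv, ?_, ⟨e⟩⟩
  rw [Nat.card_congr e.toEquiv, cardA5]

end Stmt19
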